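/- arXiv:1811.00230 — 5 statements merged into one kernel-verified Lean document; each statement's English description precedes it below -/
import Mathlib

section
/- Let G be a finite distance-regular graph of diameter 3 with valency k that is antipodal, i.e. the relation on vertices defined by 'x = y or d(x,y) = 3' is an equivalence relation, and let θ1 be the second-largest eigenvalue of its adjacency matrix. Then h_G ≤ (k − θ1)/k. -/
open Finset Matrix

/-- `E[S,T]`: the number of ordered pairs `(x, y)` with `x ∈ S`, `y ∈ T` and `x, y` adjacent. -/
def eB {V : Type} [Fintype V] [DecidableEq V] (G : SimpleGraph V) [DecidableRel G.Adj]
    (S T : Finset V) : ℕ :=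
  ((S ×ˢ T).filter fun p => G.Adj p.1 p.2).card

/-- The Cheeger constant of a `k`-regular graph `G`: the infimum of
`E[S,Sᶜ] / (k·|S|)` over nonempty vertex subsets `S` with `2·|S| ≤ |V|`. -/
noncomputable def cheeger {V : Type} [Fintype V] [DecidableEq V] (G : SimpleGraph V)
    [DecidableRel G.Adj] (k : ℕ) : ℝ :=
  sInf {x : ℝ | ∃ S : Finset V, S.Nonempty ∧ 2 * S.card ≤ Fintype.card V ∧
    x = (eB G S Sᶜ : ℝ) / (k * S.card)}

/-- `θ` is an eigenvalue of the adjacency matrix of `G`. -/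
def IsAdjEigenvalue {V : Type} [Fintype V] [DecidableEq V] (G : SimpleGraph V)
    [DecidableRel G.Adj] (θ : ℝ) : Prop :=
  ∃ f : V → ℝ, f ≠ 0 ∧ G.adjMatrix ℝ *ᵥ f = θ • f

/-- `θ` is the second-largest adjacency eigenvalue of the connected `k`-regular graph `G`,
i.e. the largest eigenvalue distinct from the top eigenvalue `k`
(which has multiplicity one for connected graphs). -/
def IsSecondLargestAdjEigenvalue {V : Type} [Fintype V] [DecidableEq V] (G : SimpleGraph V)
    [DecidableRel G.Adj] (k : ℕ) (θ : ℝ) : Prop :=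
  IsAdjEigenvalue G θ ∧ θ ≠ (k : ℝ) ∧ ∀ μ : ℝ, IsAdjEigenvalue G μ → μ ≠ (k : ℝ) → μ ≤ θ

/-- `G` is distance-regular of diameter `D` with intersection numbers `b i`, `c i`:
for every pair of vertices `x, y` at graph distance `i ≤ D`, the vertex `y` has exactly
`c i` neighbors at distance `i - 1` from `x` and exactly `b i` neighbors at distance
`i + 1` from `x`. -/
def IsDistRegular {V : Type} [Fintype V] (G : SimpleGraph V) (D : ℕ) (b c : ℕ → ℕ) : Prop :=
  ∀ i ≤ D, ∀ x y : V, G.dist x y = i →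
    Nat.card {z : V | G.Adj y z ∧ G.dist x z = i - 1} = c i ∧
    Nat.card {z : V | G.Adj y z ∧ G.dist x z = i + 1} = b i

set_option linter.unusedSectionVars false
set_option maxHeartbeats 1000000

section Aux
variable {V : Type} [Fintype V] [DecidableEq V] (G : SimpleGraph V) [DecidableRel G.Adj]

lemma natcard_filter (P : V → Prop) [DecidablePred P] :
    Nat.card {z : V | P z} = (Finset.univ.filter P).card := by
  simp [Nat.card_eq_fintype_card, Fintype.card_subtype]

lemma step_down (hconn : G.Connected) (x y : V) (i : ℕ)
    (h : G.dist x y = i + 1) : ∃ z, G.Adj y z ∧ G.dist x z = i := by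
  obtain ⟨p, hp⟩ := (hconn y x).exists_walk_length_eq_dist
  rw [SimpleGraph.dist_comm] at h
  rw [h] at hp
  cases p with
  | nil => simp at hp
  | @cons _ z _ hadj q =>
    have hql : q.length = i := by simpa using hp
    have h1 : G.dist x z ≤ i := by
      rw [SimpleGraph.dist_comm]; exact hql ▸ SimpleGraph.dist_le q
    have h2 : G.dist y x ≤ G.dist y z + G.dist z x := hconn.dist_triangle
    have h3 : G.dist y z ≤ 1 := SimpleGraph.dist_le hadj.toWalk
    have h4 : G.dist z x = G.dist x z := SimpleGraph.dist_comm ..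
    exact ⟨z, hadj, by omega⟩

variable (b c : ℕ → ℕ) (k : ℕ)

lemma count_c (hdrg : IsDistRegular G 3 b c) {i : ℕ} (hi : i ≤ 3) {x y : V}
    (h : G.dist x y = i) :
    (Finset.univ.filter fun z => G.Adj y z ∧ G.dist x z = i - 1).card = c i := by
  rw [← natcard_filter]; exact (hdrg i hi x y h).1

lemma count_b (hdrg : IsDistRegular G 3 b c) {i : ℕ} (hi : i ≤ 3) {x y : V}
    (h : G.dist x y = i) :
    (Finset.univ.filter fun z => G.Adj y z ∧ G.dist x z = i + 1).card = b i := by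
  rw [← natcard_filter]; exact (hdrg i hi x y h).2

lemma hdeg (hdrg : IsDistRegular G 3 b c) (hk : b 0 = k) (x : V) :
    (Finset.univ.filter (G.Adj x)).card = k := by
  have h0 := count_b G b c hdrg (i := 0) (by norm_num) (SimpleGraph.dist_self (G := G) (v := x))
  rw [← hk, ← h0]
  congr 1
  ext z
  simp only [Finset.mem_filter, Finset.mem_univ, true_and, zero_add,
    SimpleGraph.dist_eq_one_iff_adj, and_self]

/-- partition of the neighborhood of `y` for a distance-1 pair `(x,y)`:
`k = 1 + a1 + b1`. -/
lemma dist1_part (hconn : G.Connected) (hdrg : IsDistRegular G 3 b c) (hk : b 0 = k)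
    {x y : V} (h : G.dist x y = 1) :
    (Finset.univ.filter fun z => G.Adj y z ∧ G.dist x z = 1).card + (1 + b 1) = k := by
  have hadj : G.Adj x y := SimpleGraph.dist_eq_one_iff_adj.mp h
  have hb1 := count_b G b c hdrg (i := 1) (by norm_num) h
  have hc1 : (Finset.univ.filter fun z => G.Adj y z ∧ G.dist x z = 0).card = 1 := by
    rw [Finset.card_eq_one]
    refine ⟨x, ?_⟩
    ext z
    simp only [Finset.mem_filter, Finset.mem_univ, true_and, Finset.mem_singleton,
      hconn.dist_eq_zero_iff]
    constructor
    · rintro ⟨-, h⟩; exact h.symm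
    · rintro rfl; exact ⟨hadj.symm, rfl⟩
  have hsplit : (Finset.univ.filter (G.Adj y)) =
      ((Finset.univ.filter fun z => G.Adj y z ∧ G.dist x z = 0) ∪
       (Finset.univ.filter fun z => G.Adj y z ∧ G.dist x z = 1)) ∪
       (Finset.univ.filter fun z => G.Adj y z ∧ G.dist x z = 2) := by
    ext z
    simp only [Finset.mem_union, Finset.mem_filter, Finset.mem_univ, true_and]
    constructor
    · intro hz
      have h1 : G.dist x z ≤ G.dist x y + G.dist y z := hconn.dist_triangle
      have h2 : G.dist y z ≤ 1 := SimpleGraph.dist_le hz.toWalk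
      have : G.dist x z ≤ 2 := by omega
      interval_cases hxz : G.dist x z <;> tauto
    · rintro ((⟨h1, -⟩ | ⟨h1, -⟩) | ⟨h1, -⟩) <;> exact h1
  have hd1 : Disjoint
      ((Finset.univ.filter fun z => G.Adj y z ∧ G.dist x z = 0) ∪
       (Finset.univ.filter fun z => G.Adj y z ∧ G.dist x z = 1))
      (Finset.univ.filter fun z => G.Adj y z ∧ G.dist x z = 2) := by
    simp only [Finset.disjoint_left, Finset.mem_union, Finset.mem_filter]
    rintro a (⟨-, -, h1⟩ | ⟨-, -, h1⟩) ⟨-, -, h2⟩ <;> omega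
  have hd0 : Disjoint (Finset.univ.filter fun z => G.Adj y z ∧ G.dist x z = 0)
      (Finset.univ.filter fun z => G.Adj y z ∧ G.dist x z = 1) := by
    simp only [Finset.disjoint_left, Finset.mem_filter]
    rintro a ⟨-, -, h1⟩ ⟨-, -, h2⟩; omega
  have := hdeg G b c k hdrg hk y
  rw [hsplit, Finset.card_union_of_disjoint hd1, Finset.card_union_of_disjoint hd0,
    hc1, hb1] at this
  omega

/-- number of common neighbours of `x` and `z` according to their distance -/
lemma common_nbrs (hconn : G.Connected) (hdrg : IsDistRegular G 3 b c) (hk : b 0 = k)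
    (hdiam : ∀ x y : V, G.dist x y ≤ 3) (x z : V) :
    ((Finset.univ.filter fun y => G.Adj x y ∧ G.Adj y z).card : ℤ) =
      if G.dist x z = 0 then (k : ℤ) else if G.dist x z = 1 then (k : ℤ) - 1 - b 1
      else if G.dist x z = 2 then (c 2 : ℤ) else 0 := by
  have hxz := hdiam x z
  interval_cases hd : G.dist x z
  · rw [if_pos rfl]
    obtain rfl : x = z := (hconn.dist_eq_zero_iff).mp hd
    rw [← hdeg G b c k hdrg hk x]
    congr 2
    ext y
    simp only [Finset.mem_filter, Finset.mem_univ, true_and]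
    exact ⟨fun ⟨h1, _⟩ => h1, fun h1 => ⟨h1, h1.symm⟩⟩
  · have hpt := dist1_part G b c k hconn hdrg hk hd
    have heq : (Finset.univ.filter fun y => G.Adj x y ∧ G.Adj y z) =
        (Finset.univ.filter fun z' => G.Adj z z' ∧ G.dist x z' = 1) := by
      ext y
      simp only [Finset.mem_filter, Finset.mem_univ, true_and,
        SimpleGraph.dist_eq_one_iff_adj]
      exact ⟨fun ⟨h1, h2⟩ => ⟨h2.symm, h1⟩, fun ⟨h1, h2⟩ => ⟨h2, h1.symm⟩⟩
    rw [if_neg (by norm_num), if_pos rfl, heq]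
    omega
  · have hc2 := count_c G b c hdrg (i := 2) (by norm_num) hd
    rw [show (2:ℕ) - 1 = 1 from rfl] at hc2
    have heq : (Finset.univ.filter fun y => G.Adj x y ∧ G.Adj y z) =
        (Finset.univ.filter fun z' => G.Adj z z' ∧ G.dist x z' = 1) := by
      ext y
      simp only [Finset.mem_filter, Finset.mem_univ, true_and,
        SimpleGraph.dist_eq_one_iff_adj]
      exact ⟨fun ⟨h1, h2⟩ => ⟨h2.symm, h1⟩, fun ⟨h1, h2⟩ => ⟨h2, h1.symm⟩⟩
    rw [if_neg (by norm_num), if_neg (by norm_num), if_pos rfl, heq, hc2]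
  · have heq : (Finset.univ.filter fun y => G.Adj x y ∧ G.Adj y z) = ∅ := by
      ext y
      simp only [Finset.mem_filter, Finset.mem_univ, true_and, Finset.notMem_empty,
        iff_false, not_and]
      intro h1 h2
      have t1 : G.dist x z ≤ G.dist x y + G.dist y z := hconn.dist_triangle
      have t2 : G.dist x y ≤ 1 := SimpleGraph.dist_le h1.toWalk
      have t3 : G.dist y z ≤ 1 := SimpleGraph.dist_le h2.toWalk
      omega
    rw [if_neg (by norm_num), if_neg (by norm_num), if_neg (by norm_num), heq]
    norm_num

/-- Any adjacency eigenvalue `μ ≠ k` of an antipodal diameter-3 DRG satisfies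
`μ² - (a₁ - c₂) μ ≤ k`. -/
lemma spectral_bound (hconn : G.Connected) (hdrg : IsDistRegular G 3 b c) (hk : b 0 = k)
    (hdiam : (∀ x y : V, G.dist x y ≤ 3) ∧ ∃ x y : V, G.dist x y = 3)
    (hant : Equivalence (fun x y : V => x = y ∨ G.dist x y = 3))
    {μ : ℝ} (hμ : IsAdjEigenvalue G μ) (hne : μ ≠ (k : ℝ)) :
    μ ^ 2 - ((k : ℝ) - 1 - (b 1 : ℝ) - (c 2 : ℝ)) * μ ≤ (k : ℝ) := by
  classical
  letI : LinearOrder V := LinearOrder.lift' (Fintype.equivFin V) (Fintype.equivFin V).injective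
  obtain ⟨f, hf0, hAf⟩ := hμ
  obtain ⟨x0, y0, hxy3⟩ := hdiam.2
  obtain ⟨z2, hz2adj, hz2⟩ := step_down G hconn x0 y0 2 hxy3
  obtain ⟨z1, hz1adj, hz1⟩ := step_down G hconn x0 z2 1 hz2
  -- `c 2 ≥ 1`
  have hc2pos : 1 ≤ c 2 := by
    have h := count_c G b c hdrg (i := 2) (by norm_num) hz2
    rw [show (2:ℕ) - 1 = 1 from rfl] at h
    rw [← h]
    refine Finset.card_pos.mpr ⟨z1, ?_⟩
    simp only [Finset.mem_filter, Finset.mem_univ, true_and]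
    exact ⟨hz1adj, hz1⟩
  -- value of mulVec
  have hmv : ∀ (g : V → ℝ) (x : V), (G.adjMatrix ℝ *ᵥ g) x = ∑ y, if G.Adj x y then g y else 0 := by
    intro g x
    rw [SimpleGraph.adjMatrix_mulVec_apply, SimpleGraph.neighborFinset_eq_filter,
      Finset.sum_filter]
  -- sum of f is zero
  have hAfx : ∀ x, (∑ y, if G.Adj x y then f y else 0) = μ * f x := by
    intro x
    rw [← hmv f x, hAf]
    simp [smul_eq_mul]
  have hsum : ∑ y, f y = 0 := by
    have h1 : ∑ x, (∑ y, if G.Adj x y then f y else 0) = μ * ∑ y, f y := by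
      rw [Finset.mul_sum]
      exact Finset.sum_congr rfl fun x _ => (hAfx x).trans rfl
    rw [Finset.sum_comm] at h1
    have h2 : ∀ y : V, (∑ x, if G.Adj x y then f y else 0) = (k : ℝ) * f y := by
      intro y
      rw [← Finset.sum_filter]
      have : (Finset.univ.filter fun x => G.Adj x y) = Finset.univ.filter (G.Adj y) := by
        ext x; simp [SimpleGraph.adj_comm]
      rw [this, Finset.sum_const, hdeg G b c k hdrg hk y, nsmul_eq_mul]
    rw [Finset.sum_congr rfl fun y _ => h2 y, ← Finset.mul_sum] at h1
    by_contra hs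
    exact hne (mul_right_cancel₀ hs h1).symm
  -- distance sums
  set T : ℕ → V → ℝ := fun i x => ∑ y ∈ Finset.univ.filter fun y => G.dist x y = i, f y with hT
  have hT0 : ∀ x, T 0 x = f x := by
    intro x
    have e : (Finset.univ.filter fun y => G.dist x y = 0) = {x} := by
      ext y
      simp only [Finset.mem_filter, Finset.mem_univ, true_and, Finset.mem_singleton]
      rw [hconn.dist_eq_zero_iff]
      exact eq_comm
    show ∑ y ∈ Finset.univ.filter fun y => G.dist x y = 0, f y = f x
    rw [e, Finset.sum_singleton]
  have hT1 : ∀ x, T 1 x = μ * f x := by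
    intro x
    rw [← hAfx x]
    show ∑ y ∈ Finset.univ.filter fun y => G.dist x y = 1, f y = _
    rw [Finset.sum_filter]
    exact Finset.sum_congr rfl fun y _ => by simp [SimpleGraph.dist_eq_one_iff_adj]
  have hTsum : ∀ x, T 0 x + T 1 x + T 2 x + T 3 x = 0 := by
    intro x
    have key : T 0 x + T 1 x + T 2 x + T 3 x = ∑ y, f y := by
      show (∑ y ∈ Finset.univ.filter fun y => G.dist x y = 0, f y)
          + (∑ y ∈ Finset.univ.filter fun y => G.dist x y = 1, f y)
          + (∑ y ∈ Finset.univ.filter fun y => G.dist x y = 2, f y)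
          + (∑ y ∈ Finset.univ.filter fun y => G.dist x y = 3, f y) = ∑ y, f y
      rw [Finset.sum_filter, Finset.sum_filter, Finset.sum_filter, Finset.sum_filter,
        ← Finset.sum_add_distrib, ← Finset.sum_add_distrib, ← Finset.sum_add_distrib]
      refine Finset.sum_congr rfl fun y _ => ?_
      have hy := hdiam.1 x y
      interval_cases h : G.dist x y <;> norm_num
    rw [key, hsum]
  -- the square identity
  have hsq : ∀ x, μ * (μ * f x) =
      (k : ℝ) * f x + ((k : ℝ) - 1 - (b 1 : ℝ)) * (μ * f x) + (c 2 : ℝ) * T 2 x := by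
    intro x
    have lhs1 : (G.adjMatrix ℝ *ᵥ (G.adjMatrix ℝ *ᵥ f)) x = μ * (μ * f x) := by
      rw [hAf, Matrix.mulVec_smul, hAf]
      simp [smul_eq_mul]
    rw [← lhs1, hmv]
    have expand : ∀ y : V, (if G.Adj x y then (G.adjMatrix ℝ *ᵥ f) y else 0) =
        ∑ z, if G.Adj x y ∧ G.Adj y z then f z else 0 := by
      intro y
      rw [hmv f y]
      by_cases h : G.Adj x y
      · simp only [h, if_true, true_and]
      · simp only [h, if_false, false_and]
        simp
    rw [Finset.sum_congr rfl fun y _ => expand y, Finset.sum_comm]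
    have inner : ∀ z : V, (∑ y, if G.Adj x y ∧ G.Adj y z then f z else 0) =
        ((Finset.univ.filter fun y => G.Adj x y ∧ G.Adj y z).card : ℝ) * f z := by
      intro z
      rw [← Finset.sum_filter, Finset.sum_const, nsmul_eq_mul]
    rw [Finset.sum_congr rfl fun z _ => inner z]
    have hcast : ∀ z : V, ((Finset.univ.filter fun y => G.Adj x y ∧ G.Adj y z).card : ℝ) * f z =
        (k : ℝ) * (if G.dist x z = 0 then f z else 0) +
        ((k : ℝ) - 1 - (b 1 : ℝ)) * (if G.dist x z = 1 then f z else 0) +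
        (c 2 : ℝ) * (if G.dist x z = 2 then f z else 0) := by
      intro z
      have hcn := common_nbrs G b c k hconn hdrg hk hdiam.1 x z
      have : ((Finset.univ.filter fun y => G.Adj x y ∧ G.Adj y z).card : ℝ) =
          if G.dist x z = 0 then (k : ℝ) else if G.dist x z = 1 then (k : ℝ) - 1 - b 1
          else if G.dist x z = 2 then (c 2 : ℝ) else 0 := by
        have h' := congrArg (fun t : ℤ => (t : ℝ)) hcn
        simp only [apply_ite (fun t : ℤ => (t : ℝ))] at h'
        push_cast at h'
        exact h' 
      rw [this]
      split_ifs <;> first | ring1 | (exfalso; omega)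
    rw [Finset.sum_congr rfl fun z _ => hcast z]
    rw [Finset.sum_add_distrib, Finset.sum_add_distrib, ← Finset.mul_sum, ← Finset.mul_sum,
      ← Finset.mul_sum]
    have g0 : (∑ z, if G.dist x z = 0 then f z else 0) = T 0 x := (Finset.sum_filter _ _).symm
    have g1 : (∑ z, if G.dist x z = 1 then f z else 0) = T 1 x := (Finset.sum_filter _ _).symm
    have g2 : (∑ z, if G.dist x z = 2 then f z else 0) = T 2 x := (Finset.sum_filter _ _).symm
    rw [g0, g1, g2, hT0, hT1]
  -- the fiber quadratic form
  have hQF : ∑ x, f x * T 3 x ≥ - ∑ x, f x ^ 2 := by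
    set R : V → V → Prop := fun x y => x = y ∨ G.dist x y = 3 with hR
    have min'_congr : ∀ (s t : Finset V) (hs : s.Nonempty) (ht : t.Nonempty), s = t →
        s.min' hs = t.min' ht := by rintro s t hs ht rfl; rfl
    have hne' : ∀ x : V, (Finset.univ.filter (R x)).Nonempty :=
      fun x => ⟨x, Finset.mem_filter.mpr ⟨Finset.mem_univ x, hant.refl x⟩⟩
    set rep : V → V := fun x => (Finset.univ.filter (R x)).min' (hne' x) with hrep
    have hfilter : ∀ {x y}, R x y → Finset.univ.filter (R x) = Finset.univ.filter (R y) := by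
      intro x y h
      ext w
      simp only [Finset.mem_filter, Finset.mem_univ, true_and]
      exact ⟨fun hw => hant.trans (hant.symm h) hw, fun hw => hant.trans h hw⟩
    have hrep_eq : ∀ {x y}, R x y → rep x = rep y :=
      fun {x y} h => min'_congr _ _ _ _ (hfilter h)
    have hrep_R : ∀ x, R x (rep x) :=
      fun x => (Finset.mem_filter.mp (Finset.min'_mem _ (hne' x))).2
    have hrep_iff : ∀ x y, rep y = rep x ↔ R x y := by
      intro x y
      constructor
      · intro h
        have h1 : R x (rep x) := hrep_R x
        have h2 : R y (rep y) := hrep_R y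
        rw [h] at h2
        exact hant.trans h1 (hant.symm h2)
      · intro h
        exact (hrep_eq (hant.symm h))
    set g : V → ℝ := fun v => ∑ y ∈ Finset.univ.filter fun y => rep y = v, f y with hg
    have key : ∑ x, f x * g (rep x) = ∑ v, (g v) ^ 2 := by
      rw [← Finset.sum_fiberwise Finset.univ rep (fun x => f x * g (rep x))]
      refine Finset.sum_congr rfl fun v _ => ?_
      have : ∀ x ∈ Finset.univ.filter fun x => rep x = v, f x * g (rep x) = f x * g v := by
        intro x hx
        rw [(Finset.mem_filter.mp hx).2]
      rw [Finset.sum_congr rfl this, ← Finset.sum_mul, hg]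
      ring
    have hgx : ∀ x, g (rep x) = f x + T 3 x := by
      intro x
      rw [hg]
      simp only
      have e : (Finset.univ.filter fun y => rep y = rep x) =
          insert x (Finset.univ.filter fun y => G.dist x y = 3) := by
        ext y
        simp only [Finset.mem_filter, Finset.mem_univ, true_and, Finset.mem_insert]
        rw [hrep_iff]
        constructor
        · rintro (rfl | h)
          · exact Or.inl rfl
          · exact Or.inr h
        · rintro (rfl | h)
          · exact Or.inl rfl
          · exact Or.inr h
      rw [e, Finset.sum_insert (by simp [SimpleGraph.dist_self])]
    have : ∑ x, f x * (f x + T 3 x) = ∑ v, (g v) ^ 2 := by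
      rw [← key]
      exact Finset.sum_congr rfl fun x _ => by rw [hgx x]
    have hpos : (0:ℝ) ≤ ∑ v, (g v) ^ 2 := Finset.sum_nonneg fun v _ => sq_nonneg _
    have hexp : ∑ x, f x * (f x + T 3 x) = ∑ x, f x ^ 2 + ∑ x, f x * T 3 x := by
      rw [← Finset.sum_add_distrib]
      exact Finset.sum_congr rfl fun x _ => by ring
    linarith [this ▸ hpos, hexp ▸ this]
  -- norm positive
  have hnorm : (0:ℝ) < ∑ x, f x ^ 2 := by
    have : ∃ x, f x ≠ 0 := by
      by_contra h
      push_neg at h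
      exact hf0 (funext fun x => h x)
    obtain ⟨x, hx⟩ := this
    have : (0:ℝ) < f x ^ 2 := by positivity
    exact lt_of_lt_of_le this (Finset.single_le_sum (fun i _ => sq_nonneg (f i)) (Finset.mem_univ x))
  -- combine
  have hT3 : ∀ x, (c 2 : ℝ) * (f x * T 3 x) =
      (- (c 2 : ℝ) * (1 + μ) - (μ ^ 2 - ((k:ℝ) - 1 - b 1) * μ - k)) * f x ^ 2 := by
    intro x
    have h1 := hTsum x
    have h2 := hsq x
    rw [hT0, hT1] at h1
    -- T 3 x = - f x - μ f x - T 2 x ; c2 * T 2 x = μ² f x - a1 μ f x - k f x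
    have hc2T2 : (c 2 : ℝ) * T 2 x = μ ^ 2 * f x - ((k:ℝ) - 1 - b 1) * (μ * f x) - (k:ℝ) * f x := by
      linear_combination (-1 : ℝ) * h2
    have hT3x : T 3 x = - f x - μ * f x - T 2 x := by linarith
    rw [hT3x]
    linear_combination (- f x) * hc2T2
  have hsum3 : (c 2 : ℝ) * ∑ x, f x * T 3 x =
      (- (c 2 : ℝ) * (1 + μ) - (μ ^ 2 - ((k:ℝ) - 1 - b 1) * μ - k)) * ∑ x, f x ^ 2 := by
    rw [Finset.mul_sum, Finset.mul_sum]
    exact Finset.sum_congr rfl fun x _ => by rw [hT3 x]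
  have hc2R : (0:ℝ) < (c 2 : ℝ) := by exact_mod_cast hc2pos
  have h1 : (c 2 : ℝ) * (- ∑ x, f x ^ 2) ≤ (c 2 : ℝ) * ∑ x, f x * T 3 x :=
    mul_le_mul_of_nonneg_left hQF hc2R.le
  have h3 : - (c 2 : ℝ) * (1 + μ) - (μ ^ 2 - ((k:ℝ) - 1 - b 1) * μ - (k:ℝ)) + (c 2:ℝ) ≥ 0 := by
    by_contra hcon
    push_neg at hcon
    nlinarith [hnorm, h1, hsum3]
  nlinarith [h3]

lemma eB_eq_sum (S T : Finset V) : eB G S T = ∑ v ∈ S, (T.filter (G.Adj v)).card := by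
  classical
  rw [eB, Finset.card_eq_sum_card_fiberwise (f := Prod.fst) (t := S)
    (fun p hp => (Finset.mem_product.mp (Finset.mem_filter.mp hp).1).1)]
  refine Finset.sum_congr rfl fun v hv => ?_
  have e : ((S ×ˢ T).filter fun p => G.Adj p.1 p.2).filter (fun p => p.1 = v) =
      {v} ×ˢ (T.filter (G.Adj v)) := by
    ext ⟨a, b⟩
    simp only [Finset.mem_filter, Finset.mem_product, Finset.mem_singleton]
    constructor
    · rintro ⟨⟨⟨-, hb⟩, hadj⟩, rfl⟩
      exact ⟨rfl, hb, hadj⟩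
    · rintro ⟨rfl, hb, hadj⟩
      exact ⟨⟨⟨hv, hb⟩, hadj⟩, rfl⟩
  rw [e, Finset.card_product, Finset.card_singleton, one_mul]

/-- The good cut: a union of `⌊r/2⌋` closed unit balls centred in one antipodal class. -/
lemma good_set (hconn : G.Connected) (hdrg : IsDistRegular G 3 b c) (hk : b 0 = k)
    (hdiam : (∀ x y : V, G.dist x y ≤ 3) ∧ ∃ x y : V, G.dist x y = 3)
    (hant : Equivalence (fun x y : V => x = y ∨ G.dist x y = 3)) :
    ∃ (r : ℕ) (S : Finset V), 2 ≤ r ∧ 1 ≤ c 2 ∧ b 1 = (r - 1) * c 2 ∧ 1 + b 1 ≤ k ∧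
      S.Nonempty ∧ 2 * S.card ≤ Fintype.card V ∧ S.card = (r / 2) * (k + 1) ∧
      eB G S Sᶜ = (r / 2) * (k * ((r - r / 2) * c 2)) := by
  classical
  set R : V → V → Prop := fun x y => x = y ∨ G.dist x y = 3 with hR
  obtain ⟨x0, y0, hxy3⟩ := hdiam.2
  obtain ⟨z2, hz2adj, hz2⟩ := step_down G hconn x0 y0 2 hxy3
  obtain ⟨z1, hz1adj, hz1⟩ := step_down G hconn x0 z2 1 hz2
  have hadjx0z1 : G.Adj x0 z1 := SimpleGraph.dist_eq_one_iff_adj.mp hz1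
  have hc2pos : 1 ≤ c 2 := by
    have h := count_c G b c hdrg (i := 2) (by norm_num) hz2
    rw [show (2:ℕ) - 1 = 1 from rfl] at h
    rw [← h]
    refine Finset.card_pos.mpr ⟨z1, ?_⟩
    simp only [Finset.mem_filter, Finset.mem_univ, true_and]
    exact ⟨hz1adj, hz1⟩
  have hb2pos : 1 ≤ b 2 := by
    have h := count_b G b c hdrg (i := 2) (by norm_num) hz2
    rw [← h]
    refine Finset.card_pos.mpr ⟨y0, ?_⟩
    simp only [Finset.mem_filter, Finset.mem_univ, true_and]
    exact ⟨hz2adj.symm, hxy3⟩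
  have hkb : 1 + b 1 ≤ k := by
    have := dist1_part G b c k hconn hdrg hk hz1
    omega
  -- distance helper
  have hzdist : ∀ u v z : V, G.dist u v = 3 → G.Adj u z → G.dist v z = 2 := by
    intro u v z huv hadj
    have h3 : G.dist v z ≤ 3 := hdiam.1 v z
    have t1 : G.dist u v ≤ G.dist u z + G.dist z v := hconn.dist_triangle
    have t2 : G.dist u z = 1 := SimpleGraph.dist_eq_one_iff_adj.mpr hadj
    have t3 : G.dist z v = G.dist v z := SimpleGraph.dist_comm ..
    have hne3 : G.dist v z ≠ 3 := by
      intro hvz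
      have hRuz : R u z := hant.trans (Or.inr huv) (Or.inr hvz)
      rcases hRuz with rfl | h
      · exact G.irrefl hadj
      · omega
    omega
  -- unique neighbour in a fiber
  have one_per : ∀ w x : V, ¬ R x w →
      (∃ z, G.Adj w z ∧ R x z) ∧
      (∀ z z', G.Adj w z → R x z → G.Adj w z' → R x z' → z = z') := by
    intro w x hnot
    have hne : x ≠ w := fun h => hnot (Or.inl h)
    have hd3 : G.dist x w ≠ 3 := fun h => hnot (Or.inr h)
    have hd0 : G.dist x w ≠ 0 := fun h => hne (hconn.dist_eq_zero_iff.mp h)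
    have hdle := hdiam.1 x w
    constructor
    · rcases (show G.dist x w = 1 ∨ G.dist x w = 2 by omega) with h1 | h2
      · exact ⟨x, (SimpleGraph.dist_eq_one_iff_adj.mp h1).symm, hant.refl x⟩
      · have h := count_b G b c hdrg (i := 2) (by norm_num) h2
        have : (Finset.univ.filter fun z => G.Adj w z ∧ G.dist x z = 2 + 1).Nonempty := by
          rw [← Finset.card_pos, h]; omega
        obtain ⟨z, hz⟩ := this
        simp only [Finset.mem_filter, Finset.mem_univ, true_and] at hz
        exact ⟨z, hz.1, Or.inr hz.2⟩
    · intro z z' hwz hxz hwz' hxz'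
      by_contra hzz'
      have hRzz' : R z z' := hant.trans (hant.symm hxz) hxz'
      have h3 : G.dist z z' = 3 := by
        rcases hRzz' with h | h
        · exact absurd h hzz'
        · exact h
      have t1 : G.dist z z' ≤ G.dist z w + G.dist w z' := hconn.dist_triangle
      have t2 : G.dist z w = 1 := SimpleGraph.dist_eq_one_iff_adj.mpr hwz.symm
      have t3 : G.dist w z' = 1 := SimpleGraph.dist_eq_one_iff_adj.mpr hwz'
      omega
  -- the fiber of x0
  set Fib : Finset V := Finset.univ.filter (R x0) with hFib
  set r : ℕ := Fib.card with hr
  have hx0F : x0 ∈ Fib := Finset.mem_filter.mpr ⟨Finset.mem_univ _, hant.refl x0⟩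
  have hy0F : y0 ∈ Fib := Finset.mem_filter.mpr ⟨Finset.mem_univ _, Or.inr hxy3⟩
  have hx0y0 : x0 ≠ y0 := by
    intro h
    rw [h, SimpleGraph.dist_self] at hxy3
    omega
  have hr2 : 2 ≤ r := by
    rw [hr]
    exact Finset.one_lt_card.mpr ⟨x0, hx0F, y0, hy0F, hx0y0⟩
  have hFib3 : ∀ u ∈ Fib, ∀ v ∈ Fib, u ≠ v → G.dist u v = 3 := by
    intro u hu v hv huv
    have hu' : R x0 u := (Finset.mem_filter.mp hu).2
    have hv' : R x0 v := (Finset.mem_filter.mp hv).2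
    rcases hant.trans (hant.symm hu') hv' with h | h
    · exact absurd h huv
    · exact h
  -- b 1 = (r - 1) * c 2
  have hb1 : b 1 = (r - 1) * c 2 := by
    have hb1c := count_b G b c hdrg (i := 1) (by norm_num) hz1
    have hbiU : (Finset.univ.filter fun w => G.Adj z1 w ∧ G.dist x0 w = 1 + 1) =
        (Fib.erase x0).biUnion
          (fun x' => Finset.univ.filter fun w => G.Adj z1 w ∧ G.Adj x' w) := by
      ext w
      simp only [Finset.mem_filter, Finset.mem_univ, true_and, Finset.mem_biUnion,
        Finset.mem_erase]
      constructor
      · rintro ⟨hadj, hd2⟩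
        have hnR : ¬ R x0 w := by
          rintro (rfl | h)
          · rw [SimpleGraph.dist_self] at hd2; omega
          · omega
        obtain ⟨⟨z, hz, hzR⟩, -⟩ := one_per w x0 hnR
        refine ⟨z, ⟨?_, Finset.mem_filter.mpr ⟨Finset.mem_univ _, hzR⟩⟩, hadj, hz.symm⟩
        intro hzx0
        have hd1 : G.dist x0 w = 1 :=
          SimpleGraph.dist_eq_one_iff_adj.mpr (hzx0 ▸ hz).symm
        omega
      · rintro ⟨x', ⟨hne', hx'F⟩, hadj, hadj'⟩
        refine ⟨hadj, ?_⟩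
        have hd3 : G.dist x0 x' = 3 := hFib3 x0 hx0F x' hx'F (Ne.symm hne')
        have t1 : G.dist x0 w ≤ G.dist x0 z1 + G.dist z1 w := hconn.dist_triangle
        have t2 : G.dist z1 w = 1 := SimpleGraph.dist_eq_one_iff_adj.mpr hadj
        have t3 : G.dist x0 x' ≤ G.dist x0 w + G.dist w x' := hconn.dist_triangle
        have t4 : G.dist w x' = 1 := SimpleGraph.dist_eq_one_iff_adj.mpr hadj'.symm
        omega
    have hdisjU : ∀ x' ∈ Fib.erase x0, ∀ x'' ∈ Fib.erase x0, x' ≠ x'' →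
        Disjoint (Finset.univ.filter fun w => G.Adj z1 w ∧ G.Adj x' w)
          (Finset.univ.filter fun w => G.Adj z1 w ∧ G.Adj x'' w) := by
      intro x' hx' x'' hx'' hne'
      simp only [Finset.disjoint_left, Finset.mem_filter, Finset.mem_univ, true_and]
      rintro w ⟨-, h1⟩ ⟨-, h2⟩
      have hd3 : G.dist x' x'' = 3 :=
        hFib3 x' (Finset.mem_of_mem_erase hx') x'' (Finset.mem_of_mem_erase hx'') hne'
      have t1 : G.dist x' x'' ≤ G.dist x' w + G.dist w x'' := hconn.dist_triangle
      have t2 : G.dist x' w = 1 := SimpleGraph.dist_eq_one_iff_adj.mpr h1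
      have t3 : G.dist w x'' = 1 := SimpleGraph.dist_eq_one_iff_adj.mpr h2.symm
      omega
    have hpiece : ∀ x' ∈ Fib.erase x0,
        (Finset.univ.filter fun w => G.Adj z1 w ∧ G.Adj x' w).card = c 2 := by
      intro x' hx'
      have hd3 : G.dist x0 x' = 3 :=
        hFib3 x0 hx0F x' (Finset.mem_of_mem_erase hx') (fun h => (Finset.mem_erase.mp hx').1 h.symm)
      have hd2 : G.dist x' z1 = 2 := hzdist x0 x' z1 hd3 hadjx0z1
      have h := count_c G b c hdrg (i := 2) (by norm_num) hd2
      rw [show (2:ℕ) - 1 = 1 from rfl] at h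
      rw [← h]
      congr 1
      ext w
      simp [SimpleGraph.dist_eq_one_iff_adj]
    rw [← hb1c, hbiU, Finset.card_biUnion hdisjU]
    rw [Finset.sum_congr rfl hpiece, Finset.sum_const, smul_eq_mul,
      Finset.card_erase_of_mem hx0F]
  -- choose the half fiber and build S
  set m : ℕ := r / 2 with hm
  have hm1 : 1 ≤ m := by omega
  have hmr : m ≤ r := Nat.div_le_self r 2
  have h2m : 2 * m ≤ r := by omega
  obtain ⟨Tf, hTsub, hTcard⟩ := Finset.exists_subset_card_eq (show m ≤ Fib.card from hmr)
  set ball : V → Finset V := fun x => insert x (G.neighborFinset x) with hball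
  have hnbr : ∀ x : V, G.neighborFinset x = Finset.univ.filter (G.Adj x) := fun x =>
    SimpleGraph.neighborFinset_eq_filter G
  have hnbrcard : ∀ x : V, (G.neighborFinset x).card = k := fun x => by
    rw [hnbr]; exact hdeg G b c k hdrg hk x
  have hballcard : ∀ x : V, (ball x).card = k + 1 := by
    intro x
    rw [hball]
    simp only
    rw [Finset.card_insert_of_notMem (SimpleGraph.notMem_neighborFinset_self G x), hnbrcard]
  have hballmem : ∀ x y : V, y ∈ ball x ↔ (y = x ∨ G.Adj x y) := by
    intro x y
    rw [hball]
    simp [SimpleGraph.mem_neighborFinset]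
  have hdisjB : ∀ x' ∈ Fib, ∀ x'' ∈ Fib, x' ≠ x'' → Disjoint (ball x') (ball x'') := by
    intro x' h1 x'' h2 hne'
    simp only [Finset.disjoint_left]
    intro y hy1 hy2
    rw [hballmem] at hy1 hy2
    have d1 : G.dist x' y ≤ 1 := by
      rcases hy1 with rfl | h
      · simp [SimpleGraph.dist_self]
      · exact le_of_eq (SimpleGraph.dist_eq_one_iff_adj.mpr h)
    have d2 : G.dist y x'' ≤ 1 := by
      rcases hy2 with rfl | h
      · simp [SimpleGraph.dist_self]
      · exact le_of_eq (SimpleGraph.dist_eq_one_iff_adj.mpr h.symm)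
    have t1 : G.dist x' x'' ≤ G.dist x' y + G.dist y x'' := hconn.dist_triangle
    have h3 := hFib3 x' h1 x'' h2 hne'
    omega
  set S : Finset V := Tf.biUnion ball with hS
  have hScard : S.card = m * (k + 1) := by
    rw [hS, Finset.card_biUnion
      (fun x' h1 x'' h2 hne' => hdisjB x' (hTsub h1) x'' (hTsub h2) hne')]
    rw [Finset.sum_congr rfl (fun x _ => hballcard x), Finset.sum_const, hTcard, smul_eq_mul]
  have hSne : S.Nonempty := by
    have : Tf.Nonempty := Finset.card_pos.mp (by omega)
    obtain ⟨x', hx'⟩ := this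
    exact ⟨x', Finset.mem_biUnion.mpr ⟨x', hx', Finset.mem_insert_self _ _⟩⟩
  have h2S : 2 * S.card ≤ Fintype.card V := by
    have hfull : (Fib.biUnion ball).card = r * (k + 1) := by
      rw [Finset.card_biUnion hdisjB, Finset.sum_congr rfl (fun x _ => hballcard x),
        Finset.sum_const, smul_eq_mul]
    have : (Fib.biUnion ball).card ≤ Fintype.card V := by
      rw [← Finset.card_univ]
      exact Finset.card_le_card (Finset.subset_univ _)
    rw [hScard]
    calc 2 * (m * (k+1)) = (2*m) * (k+1) := by ring
    _ ≤ r * (k+1) := Nat.mul_le_mul_right _ h2m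
    _ ≤ Fintype.card V := by omega
  refine ⟨r, S, hr2, hc2pos, hb1, hkb, hSne, h2S, hScard, ?_⟩
  -- now the edge count
  have hcompl : ∀ v : V, (Sᶜ.filter (G.Adj v)).card + (S.filter (G.Adj v)).card = k := by
    intro v
    have hu : (S.filter (G.Adj v)) ∪ (Sᶜ.filter (G.Adj v)) = Finset.univ.filter (G.Adj v) := by
      rw [← Finset.filter_union, Finset.union_compl]
    have hd : Disjoint (S.filter (G.Adj v)) (Sᶜ.filter (G.Adj v)) :=
      Finset.disjoint_filter_filter disjoint_compl_right
    have := Finset.card_union_of_disjoint hd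
    rw [hu, hdeg G b c k hdrg hk v] at this
    omega
  -- membership facts
  have hTF3 : ∀ x' ∈ Tf, ∀ x'' ∈ Tf, x' ≠ x'' → G.dist x' x'' = 3 :=
    fun x' h1 x'' h2 hne' => hFib3 x' (hTsub h1) x'' (hTsub h2) hne'
  -- degree of a centre inside S
  have hcenter : ∀ x' ∈ Tf, (S.filter (G.Adj x')).card = k := by
    intro x' hx'
    have : S.filter (G.Adj x') = G.neighborFinset x' := by
      ext y
      simp only [Finset.mem_filter, SimpleGraph.mem_neighborFinset]
      constructor
      · rintro ⟨-, h⟩; exact h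
      · intro h
        refine ⟨Finset.mem_biUnion.mpr ⟨x', hx', ?_⟩, h⟩
        rw [hballmem]
        exact Or.inr h
    rw [this, hnbrcard]
  -- degree of a neighbour of a centre inside S
  have hnbrdeg : ∀ x' ∈ Tf, ∀ z ∈ G.neighborFinset x',
      ((S.filter (G.Adj z)).card : ℤ) = (k : ℤ) - b 1 + (m - 1) * c 2 := by
    intro x' hx' z hzN
    have hadjz : G.Adj x' z := (SimpleGraph.mem_neighborFinset ..).mp hzN
    have hSdecomp : S.filter (G.Adj z) = Tf.biUnion (fun x'' => (ball x'').filter (G.Adj z)) := by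
      rw [hS, Finset.filter_biUnion]
    have hdisj' : ∀ u ∈ Tf, ∀ v ∈ Tf, u ≠ v →
        Disjoint ((ball u).filter (G.Adj z)) ((ball v).filter (G.Adj z)) :=
      fun u h1 v h2 hne' => Finset.disjoint_filter_filter
        (hdisjB u (hTsub h1) v (hTsub h2) hne')
    rw [hSdecomp, Finset.card_biUnion hdisj']
    -- split the sum into the own ball and the others
    rw [← Finset.sum_erase_add _ _ hx']
    push_cast [Nat.cast_sum]
    have hown : (((ball x').filter (G.Adj z)).card : ℤ) = 1 + ((k:ℤ) - 1 - b 1) := by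
      rw [hball]
      simp only
      rw [Finset.filter_insert, if_pos hadjz.symm,
        Finset.card_insert_of_notMem (by
          simp only [Finset.mem_filter, SimpleGraph.mem_neighborFinset]
          rintro ⟨h, -⟩
          exact G.irrefl h)]
      have hW := common_nbrs G b c k hconn hdrg hk hdiam.1 x' z
      rw [if_neg, if_pos (SimpleGraph.dist_eq_one_iff_adj.mpr hadjz)] at hW
      · have he : ((G.neighborFinset x').filter (G.Adj z)) =
            (Finset.univ.filter fun y => G.Adj x' y ∧ G.Adj y z) := by
          ext w
          simp only [Finset.mem_filter, SimpleGraph.mem_neighborFinset, Finset.mem_univ,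
            true_and]
          constructor
          · rintro ⟨h1, h2⟩; exact ⟨h1, h2.symm⟩
          · rintro ⟨h1, h2⟩; exact ⟨h1, h2.symm⟩
        rw [he]
        push_cast [hW]
        ring
      · rw [SimpleGraph.dist_eq_one_iff_adj.mpr hadjz]; omega
    have hother : ∀ x'' ∈ Tf.erase x',
        (((ball x'').filter (G.Adj z)).card : ℤ) = (c 2 : ℤ) := by
      intro x'' hx''
      have hx''T : x'' ∈ Tf := Finset.mem_of_mem_erase hx''
      have hne'' : x'' ≠ x' := (Finset.mem_erase.mp hx'').1
      have hd3 : G.dist x' x'' = 3 := hTF3 x' hx' x'' hx''T (Ne.symm hne'')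
      have hd2 : G.dist x'' z = 2 := hzdist x' x'' z hd3 hadjz
      have hnadj : ¬ G.Adj z x'' := by
        intro h
        have : G.dist x'' z = 1 := SimpleGraph.dist_eq_one_iff_adj.mpr h.symm
        omega
      rw [hball]
      simp only
      rw [Finset.filter_insert, if_neg hnadj]
      have hW := common_nbrs G b c k hconn hdrg hk hdiam.1 x'' z
      rw [if_neg (by omega), if_neg (by omega), if_pos hd2] at hW
      have he : ((G.neighborFinset x'').filter (G.Adj z)) =
          Finset.univ.filter fun y => G.Adj x'' y ∧ G.Adj y z := by
        ext w
        simp only [Finset.mem_filter, SimpleGraph.mem_neighborFinset, Finset.mem_univ,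
          true_and]
        constructor
        · rintro ⟨h1, h2⟩; exact ⟨h1, h2.symm⟩
        · rintro ⟨h1, h2⟩; exact ⟨h1, h2.symm⟩
      rw [he, hW]
    rw [Finset.sum_congr rfl hother, Finset.sum_const, Finset.card_erase_of_mem hx',
      hTcard, hown]
    rw [nsmul_eq_mul, Nat.cast_sub hm1]
    push_cast
    ring
  -- total count
  have hout : ∀ x' ∈ Tf, ∀ z ∈ G.neighborFinset x',
      ((Sᶜ.filter (G.Adj z)).card : ℤ) = ((r : ℤ) - m) * c 2 := by
    intro x' hx' z hz
    have h1 := hcompl z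
    have h2 := hnbrdeg x' hx' z hz
    have h3 : ((Sᶜ.filter (G.Adj z)).card : ℤ) + ((S.filter (G.Adj z)).card : ℤ) = k := by
      exact_mod_cast congrArg (fun t : ℕ => (t : ℤ)) h1
    have hb1' : (b 1 : ℤ) = ((r:ℤ) - 1) * c 2 := by
      rw [hb1]
      push_cast [Nat.cast_sub (show 1 ≤ r by omega)]
      ring
    rw [h2] at h3
    rw [hb1'] at h3
    linarith
  have houtc : ∀ x' ∈ Tf, ((Sᶜ.filter (G.Adj x')).card : ℤ) = 0 := by
    intro x' hx'
    have h1 := hcompl x'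
    rw [hcenter x' hx'] at h1
    omega
  have heB : ((eB G S Sᶜ : ℕ) : ℤ) = (m : ℤ) * ((k:ℤ) * (((r:ℤ) - m) * c 2)) := by
    rw [eB_eq_sum]
    rw [Nat.cast_sum]
    rw [hS, Finset.sum_biUnion (by
      intro u h1 v h2 hne'
      exact hdisjB u (hTsub h1) v (hTsub h2) hne')]
    have hballsum : ∀ x' ∈ Tf,
        (∑ v ∈ ball x', ((Sᶜ.filter (G.Adj v)).card : ℤ)) = (k:ℤ) * (((r:ℤ) - m) * c 2) := by
      intro x' hx'
      rw [hball]
      simp only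
      rw [Finset.sum_insert (SimpleGraph.notMem_neighborFinset_self G x')]
      rw [houtc x' hx', Finset.sum_congr rfl (fun z hz => hout x' hx' z hz),
        Finset.sum_const, hnbrcard, zero_add, nsmul_eq_mul]
    rw [Finset.sum_congr rfl hballsum, Finset.sum_const, hTcard, nsmul_eq_mul]
  have : ((m * (k * ((r - m) * c 2)) : ℕ) : ℤ) =
      (m : ℤ) * ((k:ℤ) * (((r:ℤ) - m) * c 2)) := by
    push_cast [Nat.cast_sub hmr]
    ring
  exact_mod_cast heB.trans this.symm

/-- The key numeric inequality. -/
lemma numeric_ineq (K C Rr M θ1 : ℝ)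
    (hC1 : 1 ≤ C) (hM1 : 1 ≤ M) (h2M : 2 * M ≤ Rr) (hR2M : Rr ≤ 2 * M + 1)
    (hB : 1 + (Rr - 1) * C ≤ K)
    (hθsq : θ1 ^ 2 - (K - 1 - (Rr - 1) * C - C) * θ1 ≤ K)
    (hpar : Rr = 2 * M ∨ Rr = 2 * M + 1) :
    θ1 * (K + 1) ≤ K * (K + 1 - (Rr - M) * C) := by
  have hR2 : 2 ≤ Rr := by linarith
  have hC0 : (0:ℝ) ≤ C := by linarith
  have hB1C : C ≤ (Rr - 1) * C := by nlinarith
  have hK2 : 2 ≤ K := by nlinarith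
  have hK0 : (0:ℝ) < K := by linarith
  have hCK : C ≤ K - 1 := by nlinarith
  set β : ℝ := K - 1 - Rr * C with hβ
  have hβeq : K - 1 - (Rr - 1) * C - C = β := by rw [hβ]; ring
  rw [hβeq] at hθsq
  set q : ℝ := (Rr - M) * C with hq
  set v : ℝ := K * (K + 1 - q) with hv
  -- key 2 : 2 v ≥ β (K+1)
  have hq2 : 2 * q ≤ (Rr + 1) * C := by
    rw [hq]; nlinarith
  have key2 : β * (K + 1) ≤ 2 * v := by
    rw [hv, hβ]
    nlinarith [mul_le_mul_of_nonneg_right hCK hK0.le, mul_nonneg hC0 (by linarith : (0:ℝ) ≤ Rr),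
      mul_le_mul_of_nonneg_left hq2 hK0.le]
  -- key 1 : v² - β(K+1)v - K(K+1)² ≥ 0
  have key1 : 0 ≤ v ^ 2 - β * (K + 1) * v - K * (K + 1) ^ 2 := by
    set x : ℝ := M * C with hx
    have hx1 : 1 ≤ x := by rw [hx]; nlinarith
    have hxB : x ≤ (Rr - 1) * C := by rw [hx]; nlinarith
    have hxK : x ≤ K - 1 := by linarith
    rcases hpar with hpe | hpo
    · -- even case: q = x
      have hqx : q = x := by rw [hq, hx, hpe]; ring
      have hβx : β = K - 1 - 2 * x := by rw [hβ, hx, hpe]; ring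
      have hinner : v ^ 2 - β * (K + 1) * v - K * (K + 1) ^ 2 =
          K * (x * ((K - x) * (K + 2) + 1)) := by
        rw [hv, hqx, hβx]; ring
      rw [hinner]
      have hfac : (0:ℝ) ≤ (K - x) * (K + 2) + 1 := by
        have := mul_nonneg (by linarith : (0:ℝ) ≤ K - x) (by linarith : (0:ℝ) ≤ K + 2)
        linarith
      have : (0:ℝ) ≤ x * ((K - x) * (K + 2) + 1) := mul_nonneg (by linarith) hfac
      positivity
    · -- odd case: q = x + C, 2x ≤ K - 1, C ≤ x
      have hqx : q = x + C := by rw [hq, hx, hpo]; ring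
      have hβx : β = K - 1 - 2 * x - C := by rw [hβ, hx, hpo]; ring
      have h2x : 2 * x ≤ K - 1 := by
        have : (Rr - 1) * C = 2 * x := by rw [hx, hpo]; ring
        linarith [hB, this]
      have hCx : C ≤ x := by rw [hx]; nlinarith
      have hinner : v ^ 2 - β * (K + 1) * v - K * (K + 1) ^ 2 =
          K * (x * ((K - x) * (K + 2) + 1) - C * (K * x + 3 * x + C)) := by
        rw [hv, hqx, hβx]; ring
      rw [hinner]
      have hP : (0:ℝ) ≤ x * ((K - x) * (K + 2) + 1) - C * (K * x + 3 * x + C) := by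
        nlinarith [mul_nonneg (sub_nonneg.2 hCx) (mul_nonneg hK0.le (by linarith : (0:ℝ) ≤ x)),
          mul_nonneg (sub_nonneg.2 hCx) (by linarith : (0:ℝ) ≤ x),
          mul_nonneg (by linarith : (0:ℝ) ≤ K - 1 - 2*x) (by linarith : (0:ℝ) ≤ x),
          mul_nonneg (mul_nonneg (by linarith : (0:ℝ) ≤ K - 1 - 2*x) (by linarith : (0:ℝ) ≤ x)) (by linarith : (0:ℝ) ≤ x),
          sq_nonneg (x - C), mul_pos hK0 (by linarith : (0:ℝ) < x)]
      positivity
  -- conclude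
  by_contra hcon
  push_neg at hcon
  have hu2 : (θ1 * (K+1)) ^ 2 - β * (K + 1) * (θ1 * (K+1)) ≤ K * (K + 1) ^ 2 := by
    nlinarith [sq_nonneg (K+1), hθsq]
  nlinarith [mul_pos (sub_pos.2 hcon) (by nlinarith : (0:ℝ) < θ1 * (K+1) + v - β * (K+1))]

end Aux

/-- A finite antipodal distance-regular graph of diameter 3 with valency `k` (i.e. the
relation "`x = y` or `d(x,y) = 3`" is an equivalence relation) with second-largest
adjacency eigenvalue `θ1` satisfies `h_G ≤ (k - θ1)/k`. -/
theorem stmt_13 {V : Type} [Fintype V] [DecidableEq V] (G : SimpleGraph V) [DecidableRel G.Adj]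
    (b c : ℕ → ℕ) (k : ℕ) (hconn : G.Connected)
    (hdrg : IsDistRegular G 3 b c) (hk : b 0 = k)
    (hdiam : (∀ x y : V, G.dist x y ≤ 3) ∧ ∃ x y : V, G.dist x y = 3)
    (hant : Equivalence (fun x y : V => x = y ∨ G.dist x y = 3))
    (θ1 : ℝ) (hθ1 : IsSecondLargestAdjEigenvalue G k θ1) :
    cheeger G k ≤ ((k : ℝ) - θ1) / (k : ℝ) := by
  classical
  obtain ⟨r, S, hr2, hc2pos, hb1, hkb, hSne, h2S, hScard, heB⟩ :=
    good_set G b c k hconn hdrg hk hdiam hant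
  have hθsq : θ1 ^ 2 - ((k : ℝ) - 1 - (b 1 : ℝ) - (c 2 : ℝ)) * θ1 ≤ (k : ℝ) :=
    spectral_bound G b c k hconn hdrg hk hdiam hant hθ1.1 hθ1.2.1
  set m : ℕ := r / 2 with hm
  have hm1 : 1 ≤ m := by omega
  have hmr : m ≤ r := Nat.div_le_self r 2
  have hpar : r = 2 * m ∨ r = 2 * m + 1 := by omega
  have hb1pos : 1 ≤ b 1 := by
    rw [hb1]
    have h1 : 1 ≤ r - 1 := by omega
    exact Nat.one_le_iff_ne_zero.mpr (Nat.mul_ne_zero (by omega) (by omega))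
  have hk2 : 2 ≤ k := by omega
  -- cheeger is at most the ratio of S
  have hmem : ((eB G S Sᶜ : ℝ) / ((k : ℝ) * S.card)) ∈
      {x : ℝ | ∃ S : Finset V, S.Nonempty ∧ 2 * S.card ≤ Fintype.card V ∧
        x = (eB G S Sᶜ : ℝ) / (k * S.card)} := ⟨S, hSne, h2S, rfl⟩
  have hbdd : BddBelow {x : ℝ | ∃ S : Finset V, S.Nonempty ∧ 2 * S.card ≤ Fintype.card V ∧
      x = (eB G S Sᶜ : ℝ) / (k * S.card)} := by
    refine ⟨0, fun x hx => ?_⟩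
    obtain ⟨S', -, -, rfl⟩ := hx
    exact div_nonneg (Nat.cast_nonneg _) (mul_nonneg (Nat.cast_nonneg _) (Nat.cast_nonneg _))
  refine le_trans (csInf_le hbdd hmem) ?_
  -- compute the ratio
  have hKpos : (0:ℝ) < (k:ℝ) := by exact_mod_cast (show 0 < k by omega)
  have hK1 : (0:ℝ) < (k:ℝ) + 1 := by positivity
  have hk0 : (k:ℝ) ≠ 0 := ne_of_gt hKpos
  have hm0 : (m:ℝ) ≠ 0 := by
    have : (0:ℝ) < (m:ℝ) := by exact_mod_cast (show 0 < m by omega)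
    exact ne_of_gt this
  have hk10 : (k:ℝ) + 1 ≠ 0 := ne_of_gt hK1
  have heBR : (eB G S Sᶜ : ℝ) = (m:ℝ) * ((k:ℝ) * (((r:ℝ) - m) * (c 2 : ℝ))) := by
    rw [heB]
    push_cast [Nat.cast_sub hmr]
    ring
  have hScardR : ((S.card : ℕ) : ℝ) = (m:ℝ) * ((k:ℝ) + 1) := by
    rw [hScard]; push_cast; ring
  have hratio : (eB G S Sᶜ : ℝ) / ((k:ℝ) * S.card) =
      (((r:ℝ) - m) * (c 2:ℝ)) / ((k:ℝ) + 1) := by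
    rw [heBR, hScardR]
    field_simp
  rw [hratio]
  -- final numeric inequality
  have hrR : (1:ℕ) ≤ r := by omega
  have hb1R : ((b 1 : ℕ) : ℝ) = ((r:ℝ) - 1) * (c 2 : ℝ) := by
    rw [hb1]; push_cast [Nat.cast_sub hrR]; ring
  have hBR : 1 + ((r:ℝ) - 1) * (c 2:ℝ) ≤ (k:ℝ) := by
    rw [← hb1R]; exact_mod_cast hkb
  rw [hb1R] at hθsq
  have hparR : (r:ℝ) = 2 * (m:ℝ) ∨ (r:ℝ) = 2 * (m:ℝ) + 1 := by
    rcases hpar with h | h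
    · left; exact_mod_cast h
    · right; exact_mod_cast h
  have hnum := numeric_ineq (k:ℝ) (c 2:ℝ) (r:ℝ) (m:ℝ) θ1 (by exact_mod_cast hc2pos)
      (by exact_mod_cast hm1) (by exact_mod_cast (show 2*m ≤ r by omega))
      (by exact_mod_cast (show r ≤ 2*m + 1 by omega)) hBR hθsq hparR
  rw [div_le_div_iff₀ hK1 hKpos]
  nlinarith [hnum]
end

section
/- Let G be a finite distance-regular graph of diameter 3 with valency k and intersection numbers b_i, c_i, set a_3 = k − c_3, and let θ1 be the second-largest eigenvalue of its adjacency matrix. Suppose G is Shilla, i.e. θ1 = a_3, and suppose that for every vertex x the set Γ3(x) of vertices at distance 3 from x satisfies 2·|Γ3(x)| ≤ |V(G)|. Then h_G ≤ c_3/k = (k − θ1)/k. -/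
open Finset Matrix

/-- A Shilla distance-regular graph of diameter 3 (one whose second-largest adjacency
eigenvalue `θ1` equals `a_3 = k - c_3`) in which `2·|Γ₃(x)| ≤ |V|` for every vertex `x`
satisfies `h_G ≤ c_3/k = (k - θ1)/k`. -/
theorem stmt_14 {V : Type} [Fintype V] [DecidableEq V] (G : SimpleGraph V) [DecidableRel G.Adj]
    (b c : ℕ → ℕ) (k : ℕ) (hconn : G.Connected)
    (hdrg : IsDistRegular G 3 b c) (hk : b 0 = k)
    (hdiam : (∀ x y : V, G.dist x y ≤ 3) ∧ ∃ x y : V, G.dist x y = 3)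
    (θ1 : ℝ) (hθ1 : IsSecondLargestAdjEigenvalue G k θ1)
    (hshilla : θ1 = (k : ℝ) - (c 3 : ℝ))
    (hhalf : ∀ x : V, 2 * Nat.card {y : V | G.dist x y = 3} ≤ Fintype.card V) :
    cheeger G k ≤ (c 3 : ℝ) / (k : ℝ) := by
  obtain ⟨hd3, x0, y0, hxy⟩ := hdiam
  -- k is positive
  have hkpos : 0 < k := by
    rw [← hk, ← (hdrg 0 (by norm_num) x0 x0 (SimpleGraph.dist_self (G := G))).2]
    have : G.dist x0 y0 ≠ 0 := by omega
    obtain ⟨w, hw⟩ := SimpleGraph.exists_walk_of_dist_ne_zero this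
    have hne : ¬ w.Nil := by
      intro h
      have := h.eq
      subst this
      simp [SimpleGraph.dist_self] at hxy
    obtain ⟨z, hz, -⟩ := SimpleGraph.Walk.not_nil_iff.mp hne
    have : Nat.card {z : V | G.Adj x0 z ∧ G.dist x0 z = 0 + 1} ≠ 0 := by
      have : z ∈ {z : V | G.Adj x0 z ∧ G.dist x0 z = 0 + 1} :=
        ⟨hz, by rw [zero_add, SimpleGraph.dist_eq_one_iff_adj]; exact hz⟩
      have hfin : Finite {z : V | G.Adj x0 z ∧ G.dist x0 z = 0 + 1} := Set.toFinite _
      exact Nat.pos_iff_ne_zero.mp (Nat.card_pos_iff.mpr ⟨⟨z, this⟩, hfin⟩)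
    omega
  set S : Finset V := univ.filter (fun y => G.dist x0 y = 3) with hS
  have hSmem : ∀ y, y ∈ S ↔ G.dist x0 y = 3 := by intro y; simp [hS]
  have hSne : S.Nonempty := ⟨y0, (hSmem y0).mpr hxy⟩
  have hScard : 2 * S.card ≤ Fintype.card V := by
    have := hhalf x0
    rwa [Nat.card_eq_fintype_card, Fintype.card_subtype] at this
  -- each y in S has exactly c 3 neighbors outside S
  have hfiber : ∀ y ∈ S, (Sᶜ.filter (G.Adj y)).card = c 3 := by
    intro y hy
    have hy3 : G.dist x0 y = 3 := (hSmem y).mp hy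
    have hc := (hdrg 3 le_rfl x0 y hy3).1
    rw [Nat.card_eq_fintype_card, Fintype.card_subtype] at hc
    rw [← hc]
    congr 1
    ext z
    simp only [mem_filter, mem_compl, mem_univ, true_and, hSmem]
    constructor
    · rintro ⟨hz3, hadj⟩
      refine ⟨hadj, ?_⟩
      have h1 : G.dist z y = 1 := SimpleGraph.dist_eq_one_iff_adj.mpr hadj.symm
      have htri : G.dist x0 y ≤ G.dist x0 z + G.dist z y := hconn.dist_triangle
      have := hd3 x0 z
      omega
    · rintro ⟨hadj, h2⟩
      exact ⟨by omega, hadj⟩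
  -- compute eB
  have heB : eB G S Sᶜ = c 3 * S.card := by
    unfold eB
    rw [Finset.card_eq_sum_card_fiberwise (f := Prod.fst) (t := S)
      (fun p hp => (mem_filter.mp hp).1 |> fun h => (Finset.mem_product.mp h).1)]
    rw [Finset.sum_congr rfl (fun y hy => ?_), Finset.sum_const, smul_eq_mul, mul_comm]
    rw [← hfiber y hy]
    apply Finset.card_bij (fun p _ => p.2)
    · rintro ⟨a, z⟩ hp
      simp only [mem_filter, Finset.mem_product] at hp ⊢
      obtain ⟨⟨⟨-, hz⟩, hadj⟩, rfl⟩ := hp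
      exact ⟨hz, hadj⟩
    · rintro ⟨a1, z1⟩ h1 ⟨a2, z2⟩ h2 h
      simp only [mem_filter] at h1 h2
      cases h1.2; cases h2.2; cases h
      rfl
    · intro z hz
      simp only [mem_filter] at hz
      exact ⟨(y, z), by simp [mem_filter, Finset.mem_product, hy, hz.1, hz.2], rfl⟩
  -- conclude
  have hmem : (c 3 : ℝ) / (k : ℝ) ∈ {x : ℝ | ∃ S : Finset V, S.Nonempty ∧
      2 * S.card ≤ Fintype.card V ∧ x = (eB G S Sᶜ : ℝ) / (k * S.card)} := by
    refine ⟨S, hSne, hScard, ?_⟩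
    rw [heB]
    have hs0 : (S.card : ℝ) ≠ 0 := Nat.cast_ne_zero.mpr hSne.card_pos.ne'
    push_cast
    rw [mul_comm (k : ℝ), ← div_div, mul_div_assoc, div_self hs0, mul_one]
  have hbdd : BddBelow {x : ℝ | ∃ S : Finset V, S.Nonempty ∧
      2 * S.card ≤ Fintype.card V ∧ x = (eB G S Sᶜ : ℝ) / (k * S.card)} := by
    refine ⟨0, ?_⟩
    rintro x ⟨T, -, -, rfl⟩
    positivity
  exact csInf_le hbdd hmem
end

section
/- Let G be a finite connected k-regular simple graph with valency k ≥ 3 and diameter at least 3 (in particular, any distance-regular graph with valency k ≥ 3 and diameter D ≥ 3). Then h_G ≤ (k − 2)/k. -/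
open Finset Matrix

namespace CheegerAux

open SimpleGraph Walk

section lists

lemma getLast_congr {α : Type*} {l1 l2 : List α} (h1 : l1 ≠ []) (h2 : l2 ≠ [])
    (h : l1 = l2) : l1.getLast h1 = l2.getLast h2 := by subst h; rfl

end lists

section walks
variable {V : Type} {G : SimpleGraph V}

lemma start_edge {u v c : V} {p : G.Walk u v} (hp : p.IsPath) (he : s(u, c) ∈ p.edges) :
    ∃ (h : G.Adj u c) (q : G.Walk c v), p = Walk.cons h q := by
  cases p with
  | nil => simp at he
  | cons h' q =>
    rename_i d
    rw [Walk.edges_cons, List.mem_cons] at he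
    rcases he with he | he
    · rw [Sym2.eq_iff] at he
      rcases he with ⟨-, rfl⟩ | ⟨rfl, rfl⟩
      · exact ⟨h', q, rfl⟩
      · exact absurd rfl h'.ne
    · exfalso
      have := Walk.fst_mem_support_of_mem_edges q he
      rw [Walk.cons_isPath_iff] at hp
      exact hp.2 this

lemma path_length_one {u v : V} {p : G.Walk u v} (hp : p.IsPath) (he : s(u, v) ∈ p.edges) :
    p.length = 1 := by
  obtain ⟨h, q, rfl⟩ := start_edge hp he
  cases q with
  | nil => simp
  | cons h2 r =>
    exfalso
    rw [Walk.cons_isPath_iff, Walk.cons_isPath_iff] at hp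
    exact hp.1.2 (Walk.end_mem_support r)

lemma support_of_length_one {u v : V} {p : G.Walk u v} (h : p.length = 1) :
    p.support = [u, v] := by
  cases p with
  | nil => simp at h
  | cons h' r =>
    rename_i b
    rw [Walk.length_cons] at h
    have hb : b = v := Walk.eq_of_length_eq_zero (p := r) (by omega)
    subst hb
    have : r = Walk.nil := by
      cases r with
      | nil => rfl
      | cons h'' r' => simp [Walk.length_cons] at h
    rw [this]
    simp

lemma closed_start_mem_tail {v : V} {q : G.Walk v v} (hq : ¬ q.Nil) :
    v ∈ q.support.tail := by
  obtain ⟨u, h, r, rfl⟩ := Walk.not_nil_iff.mp hq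
  rw [Walk.support_cons, List.tail_cons]
  exact Walk.end_mem_support r

lemma closed_support_toFinset [DecidableEq V] {v : V} {q : G.Walk v v} (hq : ¬ q.Nil) :
    q.support.toFinset = q.support.tail.toFinset := by
  conv_lhs => rw [Walk.support_eq_cons q]
  rw [List.toFinset_cons]
  exact Finset.insert_eq_self.mpr (by
    rw [List.mem_toFinset]; exact closed_start_mem_tail hq)

lemma two_nbrs {v : V} {q : G.Walk v v} (hq : q.IsCycle) :
    ∃ a b, a ≠ b ∧ a ∈ q.support ∧ b ∈ q.support ∧ G.Adj v a ∧ G.Adj v b := by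
  cases q with
  | nil => exact absurd hq Walk.IsCycle.not_of_nil
  | cons h r =>
    rename_i a
    cases hrev : r.reverse with
    | nil =>
      exfalso
      have : r.length = 0 := by
        have := congrArg Walk.length hrev
        simpa using this
      exact h.ne (Walk.eq_of_length_eq_zero this).symm
    | cons h2 r2 =>
      rename_i b
      refine ⟨a, b, ?_, by
        rw [Walk.support_cons]
        exact List.mem_cons_of_mem _ (Walk.start_mem_support r), ?_, h, h2⟩
      · intro hab
        subst hab
        have hnd : (Walk.cons h r).edges.Nodup := hq.isTrail.edges_nodup
        rw [Walk.edges_cons, List.nodup_cons] at hnd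
        have hmem : s(v, a) ∈ r.reverse.edges := by rw [hrev, Walk.edges_cons]; simp
        rw [Walk.edges_reverse, List.mem_reverse] at hmem
        exact hnd.1 hmem
      · have : b ∈ r.reverse.support := by rw [hrev]; simp
        rw [Walk.support_reverse, List.mem_reverse] at this
        rw [Walk.support_cons]
        exact List.mem_cons_of_mem _ this

variable [DecidableEq V]

lemma cycle_split {v w : V} {q : G.Walk v v} (hq : q.IsCycle) (hw : w ∈ q.support)
    (hvw : w ≠ v) :
    (q.takeUntil w hw).IsPath ∧ (q.dropUntil w hw).IsPath ∧
      (q.takeUntil w hw).length + (q.dropUntil w hw).length = q.length ∧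
      1 ≤ (q.takeUntil w hw).length ∧ 1 ≤ (q.dropUntil w hw).length := by
  set t := q.takeUntil w hw with ht
  set d := q.dropUntil w hw with hd
  have hspec : t.append d = q := Walk.take_spec q hw
  have hlen : t.length + d.length = q.length := by
    rw [← hspec, Walk.length_append]
  have htail : t.support.tail ++ d.support.tail = q.support.tail := by
    rw [← Walk.tail_support_append, hspec]
  have hnd : q.support.tail.Nodup := hq.support_nodup
  rw [← htail, List.nodup_append] at hnd
  obtain ⟨hnd1, hnd2, hdisj⟩ := hnd
  have ht1 : 1 ≤ t.length := by
    by_contra h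
    exact hvw (Walk.eq_of_length_eq_zero (p := t) (by omega)).symm
  have hd1 : 1 ≤ d.length := by
    by_contra h
    exact hvw (Walk.eq_of_length_eq_zero (p := d) (by omega))
  have hwmem : w ∈ t.support.tail := by
    have := Walk.end_mem_support t
    rw [Walk.support_eq_cons t, List.mem_cons] at this
    exact this.resolve_left hvw
  have hvmem : v ∈ d.support.tail := by
    have := Walk.end_mem_support d
    rw [Walk.support_eq_cons d, List.mem_cons] at this
    exact this.resolve_left (Ne.symm hvw)
  refine ⟨?_, ?_, hlen, ht1, hd1⟩
  · rw [Walk.isPath_def, Walk.support_eq_cons t, List.nodup_cons]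
    exact ⟨fun hv => hdisj v hv v hvmem rfl, hnd1⟩
  · rw [Walk.isPath_def, Walk.support_eq_cons d, List.nodup_cons]
    exact ⟨fun hw' => hdisj w hwmem w hw' rfl, hnd2⟩

end walks

section counting
variable {V : Type} [Fintype V] [DecidableEq V] {G : SimpleGraph V} [DecidableRel G.Adj]

lemma eB_eq_sum (S T : Finset V) : eB G S T = ∑ x ∈ S, (T.filter (G.Adj x)).card := by
  rw [eB, Finset.card_filter, Finset.sum_product]
  exact Finset.sum_congr rfl fun x _ => (Finset.card_filter _ _).symm

lemma eB_split {k : ℕ} (hreg : G.IsRegularOfDegree k) (S : Finset V) :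
    eB G S S + eB G S Sᶜ = k * S.card := by
  have h1 : ∀ x : V, (S.filter (G.Adj x)).card + (Sᶜ.filter (G.Adj x)).card = k := by
    intro x
    have hd : Disjoint (S.filter (G.Adj x)) (Sᶜ.filter (G.Adj x)) :=
      Finset.disjoint_filter_filter disjoint_compl_right
    rw [← Finset.card_union_of_disjoint hd, ← Finset.filter_union, Finset.union_compl]
    have : univ.filter (G.Adj x) = G.neighborFinset x := by
      ext y; simp [mem_neighborFinset]
    rw [this]
    exact hreg x
  rw [eB_eq_sum, eB_eq_sum, ← Finset.sum_add_distrib]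
  rw [Finset.sum_congr rfl fun x _ => h1 x, Finset.sum_const, smul_eq_mul, mul_comm]

lemma cheeger_le_aux {k : ℕ} (hk : 3 ≤ k) (hreg : G.IsRegularOfDegree k) {S : Finset V}
    (hne : S.Nonempty) (hhalf : 2 * S.card ≤ Fintype.card V)
    (hin : 2 * S.card ≤ eB G S S) :
    cheeger G k ≤ ((k : ℝ) - 2) / (k : ℝ) := by
  have hmem : (eB G S Sᶜ : ℝ) / (k * S.card) ∈ {x : ℝ | ∃ S : Finset V, S.Nonempty ∧
      2 * S.card ≤ Fintype.card V ∧ x = (eB G S Sᶜ : ℝ) / (k * S.card)} :=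
    ⟨S, hne, hhalf, rfl⟩
  have hbdd : BddBelow {x : ℝ | ∃ S : Finset V, S.Nonempty ∧
      2 * S.card ≤ Fintype.card V ∧ x = (eB G S Sᶜ : ℝ) / (k * S.card)} := by
    refine ⟨0, fun x hx => ?_⟩
    obtain ⟨S', -, -, rfl⟩ := hx
    positivity
  refine le_trans (csInf_le hbdd hmem) ?_
  have hsplit := eB_split hreg S
  have hout : (eB G S Sᶜ : ℕ) + 2 * S.card ≤ k * S.card := by omega
  have hcpos : (0 : ℝ) < S.card := by
    exact_mod_cast Finset.card_pos.mpr hne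
  have hkpos : (0 : ℝ) < k := by
    have : 0 < k := by omega
    exact_mod_cast this
  have houtR : (eB G S Sᶜ : ℝ) + 2 * S.card ≤ k * S.card := by exact_mod_cast hout
  rw [div_le_div_iff₀ (by positivity) hkpos]
  nlinarith [hcpos, hkpos, houtR]

lemma card_ge_two_k_add_two {k : ℕ} (hreg : G.IsRegularOfDegree k) {x y : V}
    (h3 : 3 ≤ G.dist x y) : 2 * k + 2 ≤ Fintype.card V := by
  set A := insert x (G.neighborFinset x) with hA
  set B := insert y (G.neighborFinset y) with hB
  have hdisj : Disjoint A B := by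
    rw [Finset.disjoint_left]
    intro z hzA hzB
    simp only [hA, hB, Finset.mem_insert, mem_neighborFinset] at hzA hzB
    have hlt : G.dist x y ≤ 2 := by
      rcases hzA with h1 | h1
      · rcases hzB with h2 | h2
        · have hxy : x = y := by rw [← h1, h2]
          simp [hxy, SimpleGraph.dist_self]
        · have hyx : G.Adj y x := by rw [← h1]; exact h2
          calc G.dist x y ≤ (Walk.cons hyx.symm Walk.nil).length := SimpleGraph.dist_le _
            _ ≤ 2 := by simp
      · rcases hzB with h2 | h2
        · have hxy : G.Adj x y := by rw [← h2]; exact h1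
          calc G.dist x y ≤ (Walk.cons hxy Walk.nil).length := SimpleGraph.dist_le _
            _ ≤ 2 := by simp
        · calc G.dist x y ≤ (Walk.cons h1 (Walk.cons h2.symm Walk.nil)).length :=
              SimpleGraph.dist_le _
            _ ≤ 2 := by simp
    omega
  have hAcard : A.card = k + 1 := by
    rw [hA, Finset.card_insert_of_notMem (G.notMem_neighborFinset_self x)]
    rw [← hreg x]; rfl
  have hBcard : B.card = k + 1 := by
    rw [hB, Finset.card_insert_of_notMem (G.notMem_neighborFinset_self y)]
    rw [← hreg y]; rfl
  calc 2 * k + 2 = A.card + B.card := by omega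
    _ = (A ∪ B).card := (Finset.card_union_of_disjoint hdisj).symm
    _ ≤ Fintype.card V := Finset.card_le_univ _

lemma not_acyclic {k : ℕ} (hk : 3 ≤ k) (hconn : G.Connected) (hreg : G.IsRegularOfDegree k) :
    ¬ G.IsAcyclic := by
  intro hacyc
  have htree : G.IsTree := ⟨hconn, hacyc⟩
  have hedge := htree.card_edgeFinset
  have hsum := G.sum_degrees_eq_twice_card_edges
  have hdeg : ∑ v, G.degree v = k * Fintype.card V := by
    rw [Finset.sum_congr rfl fun v _ => hreg v, Finset.sum_const, smul_eq_mul,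
      Finset.card_univ, mul_comm]
  have hn : 1 ≤ Fintype.card V := Fintype.card_pos_iff.mpr hconn.nonempty
  rw [hdeg] at hsum
  nlinarith [hsum, hedge, hn, hk]

lemma exists_good_set {k : ℕ} (hk : 3 ≤ k) (hconn : G.Connected)
    (hreg : G.IsRegularOfDegree k) (hdiam : ∃ x y : V, 3 ≤ G.dist x y) :
    ∃ S : Finset V, S.Nonempty ∧ 2 * S.card ≤ Fintype.card V ∧ 2 * S.card ≤ eB G S S := by
  obtain ⟨x0, y0, hdist⟩ := hdiam
  have hn : 2 * k + 2 ≤ Fintype.card V := card_ge_two_k_add_two hreg hdist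
  have hac := not_acyclic hk hconn hreg
  have hLne : ∃ n, n ∈ {n | ∃ (v : V) (p : G.Walk v v), p.IsCycle ∧ p.length = n} := by
    rw [SimpleGraph.IsAcyclic] at hac
    push_neg at hac
    obtain ⟨v, c, hc⟩ := hac
    exact ⟨c.length, v, c, hc, rfl⟩
  set g := sInf {n | ∃ (v : V) (p : G.Walk v v), p.IsCycle ∧ p.length = n} with hgdef
  obtain ⟨v0, p0, hp0, hg⟩ := Nat.sInf_mem hLne
  have hmin : ∀ (w : V) (c : G.Walk w w), c.IsCycle → g ≤ c.length :=
    fun w c hc => Nat.sInf_le ⟨w, c, hc, rfl⟩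
  have hg3 : 3 ≤ g := by have := hp0.three_le_length; omega
  set S := p0.support.toFinset with hS
  have hmemS : ∀ z, z ∈ S ↔ z ∈ p0.support := fun z => List.mem_toFinset
  have hcard : S.card = g := by
    rw [hS, closed_support_toFinset hp0.not_nil,
      List.toFinset_card_of_nodup hp0.support_nodup]
    have h1 := Walk.length_support p0
    have h2 : p0.support.length = p0.support.tail.length + 1 := by
      rw [Walk.support_eq_cons p0]; rfl
    omega
  have hne : S.Nonempty := Finset.card_pos.mp (by omega)
  have hrot : ∀ (x : V) (hx : x ∈ p0.support), (p0.rotate x hx).IsCycle ∧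
      (p0.rotate x hx).length = g ∧ (p0.rotate x hx).support.toFinset = S := by
    intro x hx
    refine ⟨hp0.rotate hx, ?_, ?_⟩
    · rw [Walk.rotate, Walk.length_append]
      have := congrArg Walk.length (Walk.take_spec p0 hx)
      rw [Walk.length_append] at this
      omega
    · rw [closed_support_toFinset (hp0.rotate hx).not_nil, hS,
        closed_support_toFinset hp0.not_nil]
      exact List.toFinset_eq_of_perm _ _ (Walk.support_rotate p0 x hx).perm
  have hnbrs : ∀ x ∈ S, 2 ≤ (S.filter (G.Adj x)).card := by
    intro x hx
    have hx' : x ∈ p0.support := (hmemS x).mp hx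
    obtain ⟨hcyc, hlen, hsup⟩ := hrot x hx'
    obtain ⟨a, b, hab, ha, hb, hxa, hxb⟩ := two_nbrs hcyc
    have haS : a ∈ S := by rw [← hsup]; exact List.mem_toFinset.mpr ha
    have hbS : b ∈ S := by rw [← hsup]; exact List.mem_toFinset.mpr hb
    exact Finset.one_lt_card.mpr ⟨a, Finset.mem_filter.mpr ⟨haS, hxa⟩, b,
      Finset.mem_filter.mpr ⟨hbS, hxb⟩, hab⟩
  have hedge : 2 * S.card ≤ eB G S S := by
    rw [eB_eq_sum]
    calc 2 * S.card = ∑ _x ∈ S, 2 := by rw [Finset.sum_const, smul_eq_mul, mul_comm]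
      _ ≤ ∑ x ∈ S, (S.filter (G.Adj x)).card := Finset.sum_le_sum hnbrs
  rcases le_or_gt g 4 with h4 | h5
  · exact ⟨S, hne, by omega, hedge⟩
  -- g ≥ 5
  have hcommon : ∀ u, u ∉ S → ∀ v w, v ∈ S → w ∈ S → v ≠ w →
      G.Adj u v → G.Adj u w → False := by
    intro u hu v w hv hw hvw huv huw
    have hv' : v ∈ p0.support := (hmemS v).mp hv
    obtain ⟨hcyc, hlenq, hsup⟩ := hrot v hv'
    set q := p0.rotate v hv' with hqdef
    have hwq : w ∈ q.support := by
      rw [← List.mem_toFinset, hsup]; exact hw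
    obtain ⟨htp, hdp, hsum, ht1, hd1⟩ := cycle_split hcyc hwq (Ne.symm hvw)
    set t := q.takeUntil w hwq with htdef
    set d := q.dropUntil w hwq with hddef
    have htS : ∀ z ∈ t.support, z ∈ S := fun z hz => by
      rw [← hsup, List.mem_toFinset]
      exact Walk.support_takeUntil_subset q hwq hz
    have hdS : ∀ z ∈ d.support, z ∈ S := fun z hz => by
      rw [← hsup, List.mem_toFinset]
      exact Walk.support_dropUntil_subset q hwq hz
    have hut : u ∉ t.support := fun h => hu (htS u h)
    have hud : u ∉ d.support := fun h => hu (hdS u h)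
    -- first cycle through u, v, t
    have hext1 : (t.append (Walk.cons huw.symm Walk.nil)).IsPath := by
      rw [Walk.isPath_def, Walk.support_append, Walk.support_cons, Walk.support_nil,
        List.tail_cons, List.nodup_append]
      refine ⟨htp.support_nodup, List.nodup_singleton u, ?_⟩
      intro z hz y hz'
      rw [List.mem_singleton] at hz'
      subst hz'
      exact fun h => hut (h ▸ hz)
    have hcyc1 : (Walk.cons huv (t.append (Walk.cons huw.symm Walk.nil))).IsCycle := by
      rw [Walk.cons_isCycle_iff]
      refine ⟨hext1, ?_⟩
      rw [Walk.edges_append, Walk.edges_cons, Walk.edges_nil, List.mem_append]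
      rintro (h | h)
      · exact hut (Walk.fst_mem_support_of_mem_edges t h)
      · rw [List.mem_singleton, Sym2.eq_iff] at h
        rcases h with ⟨rfl, -⟩ | ⟨-, rfl⟩
        · exact hu hw
        · exact hvw rfl
    have hlen1 : g ≤ t.length + 2 := by
      have := hmin u _ hcyc1
      rw [Walk.length_cons, Walk.length_append, Walk.length_cons, Walk.length_nil] at this
      omega
    -- second cycle through u, w, d
    have hext2 : (d.append (Walk.cons huv.symm Walk.nil)).IsPath := by
      rw [Walk.isPath_def, Walk.support_append, Walk.support_cons, Walk.support_nil,
        List.tail_cons, List.nodup_append]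
      refine ⟨hdp.support_nodup, List.nodup_singleton u, ?_⟩
      intro z hz y hz'
      rw [List.mem_singleton] at hz'
      subst hz'
      exact fun h => hud (h ▸ hz)
    have hcyc2 : (Walk.cons huw (d.append (Walk.cons huv.symm Walk.nil))).IsCycle := by
      rw [Walk.cons_isCycle_iff]
      refine ⟨hext2, ?_⟩
      rw [Walk.edges_append, Walk.edges_cons, Walk.edges_nil, List.mem_append]
      rintro (h | h)
      · exact hud (Walk.fst_mem_support_of_mem_edges d h)
      · rw [List.mem_singleton, Sym2.eq_iff] at h
        rcases h with ⟨rfl, -⟩ | ⟨-, rfl⟩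
        · exact hu hv
        · exact hvw rfl
    have hlen2 : g ≤ d.length + 2 := by
      have := hmin u _ hcyc2
      rw [Walk.length_cons, Walk.length_append, Walk.length_cons, Walk.length_nil] at this
      omega
    omega
  have hout : ∀ v ∈ S, ∃ u, G.Adj v u ∧ u ∉ S := by
    intro v hv
    by_contra hcon
    push_neg at hcon
    have hv' : v ∈ p0.support := (hmemS v).mp hv
    obtain ⟨hcyc, hlenq, hsup⟩ := hrot v hv'
    set q := p0.rotate v hv' with hqdef
    have hsub : G.neighborFinset v ⊆ S.filter (G.Adj v) := by
      intro u hu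
      rw [mem_neighborFinset] at hu
      exact Finset.mem_filter.mpr ⟨hcon u hu, hu⟩
    have hk3 : 3 ≤ (S.filter (G.Adj v)).card := by
      calc 3 ≤ k := hk
        _ = (G.neighborFinset v).card := (hreg v).symm
        _ ≤ (S.filter (G.Adj v)).card := Finset.card_le_card hsub
    obtain ⟨T, hTsub, hT3⟩ := Finset.exists_subset_card_eq hk3
    obtain ⟨w1, w2, w3, h12, h13, h23, hTeq⟩ := Finset.card_eq_three.mp hT3
    have hw : ∀ w ∈ T, w ∈ S ∧ G.Adj v w := fun w hw =>
      Finset.mem_filter.mp (hTsub hw)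
    have hkey : ∀ w ∈ T, (∃ rest, q.support.tail = w :: rest) ∨
        (∃ pre, pre.getLast? = some w ∧ q.support.tail = pre ++ [v]) := by
      intro w hwT
      obtain ⟨hwS, hadj⟩ := hw w hwT
      have hwv : w ≠ v := hadj.ne'
      have hwq : w ∈ q.support := by rw [← List.mem_toFinset, hsup]; exact hwS
      obtain ⟨htp, hdp, hsum, ht1, hd1⟩ := cycle_split hcyc hwq hwv
      set t := q.takeUntil w hwq with htdef
      set d := q.dropUntil w hwq with hddef
      have htail : t.support.tail ++ d.support.tail = q.support.tail := by
        rw [← Walk.tail_support_append, Walk.take_spec]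
      by_cases he : s(v, w) ∈ t.edges
      · left
        have hl1 := path_length_one htp he
        have hsupt := support_of_length_one (p := t) hl1
        refine ⟨d.support.tail, ?_⟩
        rw [← htail, hsupt]
        rfl
      · by_cases he2 : s(w, v) ∈ d.edges
        · right
          have hl2 := path_length_one hdp he2
          have hsupd := support_of_length_one (p := d) hl2
          refine ⟨t.support.tail, ?_, ?_⟩
          · have htne : t.support.tail ≠ [] := by
              intro hnil
              have := Walk.length_support t
              rw [Walk.support_eq_cons t, hnil] at this
              simp only [List.length_cons, List.length_nil] at this
              omega
            have h1 : t.support.getLast (Walk.support_ne_nil t) = w := Walk.getLast_support t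
            have h2 : t.support.getLast (Walk.support_ne_nil t) =
                (v :: t.support.tail).getLast (by simp) :=
              getLast_congr _ _ (Walk.support_eq_cons t)
            rw [List.getLast_cons htne] at h2
            rw [List.getLast?_eq_getLast htne, h2.symm.trans h1]
          · rw [← htail, hsupd]
            rfl
        · exfalso
          have hc1 : (Walk.cons hadj.symm t).IsCycle := by
            rw [Walk.cons_isCycle_iff]
            exact ⟨htp, by rw [Sym2.eq_swap]; exact he⟩
          have hc2 : (Walk.cons hadj d).IsCycle := by
            rw [Walk.cons_isCycle_iff]
            exact ⟨hdp, by rw [Sym2.eq_swap]; exact he2⟩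
          have hl1 := hmin w _ hc1
          have hl2 := hmin v _ hc2
          rw [Walk.length_cons] at hl1 hl2
          omega
    have huniq1 : ∀ wa wb (ra rb : List V), q.support.tail = wa :: ra →
        q.support.tail = wb :: rb → wa = wb := by
      intro wa wb ra rb h1 h2
      have := h1.symm.trans h2
      injection this
    have huniq2 : ∀ wa wb (pa pb : List V), pa.getLast? = some wa → pb.getLast? = some wb →
        q.support.tail = pa ++ [v] → q.support.tail = pb ++ [v] → wa = wb := by
      intro wa wb pa pb hga hgb h1 h2
      have hpp : pa = pb := List.append_inj_left' (h1.symm.trans h2) (by simp)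
      rw [hpp, hgb] at hga
      exact (Option.some.inj hga).symm
    have hmem1 : w1 ∈ T := by rw [hTeq]; simp
    have hmem2 : w2 ∈ T := by rw [hTeq]; simp
    have hmem3 : w3 ∈ T := by rw [hTeq]; simp
    rcases hkey w1 hmem1 with ⟨r1, e1⟩ | ⟨p1, g1, e1⟩ <;>
      rcases hkey w2 hmem2 with ⟨r2, e2⟩ | ⟨p2, g2, e2⟩ <;>
      rcases hkey w3 hmem3 with ⟨r3, e3⟩ | ⟨p3, g3, e3⟩
    · exact h12 (huniq1 _ _ _ _ e1 e2)
    · exact h12 (huniq1 _ _ _ _ e1 e2)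
    · exact h13 (huniq1 _ _ _ _ e1 e3)
    · exact h23 (huniq2 _ _ _ _ g2 g3 e2 e3)
    · exact h23 (huniq1 _ _ _ _ e2 e3)
    · exact h13 (huniq2 _ _ _ _ g1 g3 e1 e3)
    · exact h12 (huniq2 _ _ _ _ g1 g2 e1 e2)
    · exact h12 (huniq2 _ _ _ _ g1 g2 e1 e2)
  -- build the injection
  classical
  let f : V → V := fun v => if h : v ∈ S then Classical.choose (hout v h) else v
  have hf : ∀ v ∈ S, G.Adj v (f v) ∧ f v ∉ S := by
    intro v hv
    simp only [f, dif_pos hv]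
    exact Classical.choose_spec (hout v hv)
  have hinj : Set.InjOn f S := by
    intro v1 h1 v2 h2 heq
    by_contra hne12
    refine hcommon (f v1) (hf v1 h1).2 v1 v2 h1 h2 hne12 ((hf v1 h1).1.symm) ?_
    rw [heq]
    exact (hf v2 h2).1.symm
  have hcard2 : (S.image f).card = S.card := Finset.card_image_of_injOn hinj
  have hdisj2 : Disjoint S (S.image f) := by
    rw [Finset.disjoint_right]
    intro a ha
    obtain ⟨v, hv, rfl⟩ := Finset.mem_image.mp ha
    exact (hf v hv).2
  refine ⟨S, hne, ?_, hedge⟩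
  calc 2 * S.card = S.card + (S.image f).card := by omega
    _ = (S ∪ S.image f).card := (Finset.card_union_of_disjoint hdisj2).symm
    _ ≤ Fintype.card V := Finset.card_le_univ _

end counting

end CheegerAux

/-- A finite connected `k`-regular graph with `k ≥ 3` and diameter at least 3 satisfies
`h_G ≤ (k - 2)/k`. -/
theorem stmt_16 {V : Type} [Fintype V] [DecidableEq V] (G : SimpleGraph V) [DecidableRel G.Adj]
    (k : ℕ) (hk : 3 ≤ k) (hconn : G.Connected) (hreg : G.IsRegularOfDegree k)
    (hdiam : ∃ x y : V, 3 ≤ G.dist x y) :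
    cheeger G k ≤ ((k : ℝ) - 2) / (k : ℝ) := by
  obtain ⟨S, hne, hhalf, hin⟩ := CheegerAux.exists_good_set hk hconn hreg hdiam
  exact CheegerAux.cheeger_le_aux hk hreg hne hhalf hin
end

section
/- Let q ≥ 11 be an integer and let G be a finite distance-regular graph with intersection array {q+1, q, q, q, q, q; 1, 1, 1, 1, 1, q+1} (i.e. the incidence graph of a generalized hexagon of order (q,q), a bipartite graph of diameter 6, valency q+1 and second-largest adjacency eigenvalue √(3q)). Then h_G ≤ (q + 1 − √(3q))/(q + 1). -/
open Finset Matrix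

lemma aux_natcard {V : Type} [Fintype V] [DecidableEq V] (P : V → Prop) [DecidablePred P] :
    Nat.card {z : V | P z} = (univ.filter P).card := by
  rw [Nat.card_coe_set_eq, Set.ncard_eq_toFinset_card']
  simp [Set.toFinset_setOf]

lemma aux_count {V : Type} [Fintype V] [DecidableEq V] (x y : V) (hxy : x ≠ y)
    (m : ℕ) (hm : 1 ≤ m) :
    (((univ : Finset V).powersetCard m).filter fun S => x ∈ S ∧ y ∉ S).card
      = (Fintype.card V - 2).choose (m - 1) := by
  have hc2 : (((univ : Finset V).erase x).erase y).card = Fintype.card V - 2 := by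
    rw [card_erase_of_mem (by simp [Finset.mem_erase, hxy.symm]),
      card_erase_of_mem (by simp)]
    simp only [Finset.card_univ]; omega
  rw [← hc2, ← Finset.card_powersetCard]
  refine Finset.card_bij' (fun S _ => S.erase x) (fun T _ => insert x T) ?_ ?_ ?_ ?_
  · rintro S hS
    simp only [Finset.mem_filter, Finset.mem_powersetCard] at hS ⊢
    obtain ⟨⟨-, hcard⟩, hxS, hyS⟩ := hS
    constructor
    · intro z hz
      simp only [Finset.mem_erase] at hz ⊢
      exact ⟨fun h => hyS (h ▸ hz.2), hz.1, by simp⟩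
    · rw [Finset.card_erase_of_mem hxS, hcard]
  · rintro T hT
    simp only [Finset.mem_filter, Finset.mem_powersetCard] at hT ⊢
    obtain ⟨hsub, hcard⟩ := hT
    have hxT : x ∉ T := fun h => by simpa using (hsub h)
    have hyT : y ∉ T := fun h => by
      have := hsub h; simp [Finset.mem_erase, hxy.symm] at this
    refine ⟨⟨by simp, ?_⟩, by simp, ?_⟩
    · rw [Finset.card_insert_of_notMem hxT, hcard]; omega
    · simp only [Finset.mem_insert]
      rintro (h | h); · exact hxy h.symm
      · exact hyT h
  · rintro S hS
    simp only [Finset.mem_filter] at hS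
    exact Finset.insert_erase hS.2.1
  · rintro T hT
    simp only [Finset.mem_powersetCard] at hT
    have hxT : x ∉ T := fun h => by simpa using (hT.1 h)
    exact Finset.erase_insert hxT

lemma aux_choose (a u : ℕ) :
    (a + u + 2) * ((a + u + 1) * ((a + u).choose a))
      = ((a + u + 2).choose (a + 1)) * ((a + 1) * (u + 1)) := by
  have e3 : (a + u).choose u = (a + u).choose a := by
    have := Nat.choose_symm (show a ≤ a + u from Nat.le_add_right a u)
    simpa [show a + u - a = u by omega] using this
  have e2 := Nat.add_one_mul_choose_eq (a + u) u
  rw [e3] at e2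
  have e4 : (a + u + 1).choose (u + 1) = (a + u + 1).choose a := by
    have := Nat.choose_symm (show a ≤ a + u + 1 from by omega)
    simpa [show a + u + 1 - a = u + 1 by omega] using this
  have e1 := Nat.add_one_mul_choose_eq (a + u + 1) a
  calc (a + u + 2) * ((a + u + 1) * ((a + u).choose a))
      = (a + u + 2) * ((a + u + 1).choose (u + 1) * (u + 1)) := by
        rw [show (a+u+1) * ((a+u).choose a) = (a+u+1).choose (u+1) * (u+1) from by
          simpa [Nat.succ_eq_add_one] using e2]
    _ = ((a + u + 2) * ((a + u + 1).choose a)) * (u + 1) := by rw [e4]; ring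
    _ = ((a + u + 2).choose (a + 1) * (a + 1)) * (u + 1) := by
        rw [show (a+u+2) * ((a+u+1).choose a) = (a+u+2).choose (a+1) * (a+1) from by
          simpa [Nat.succ_eq_add_one] using e1]
    _ = ((a + u + 2).choose (a + 1)) * ((a + 1) * (u + 1)) := by ring

set_option maxHeartbeats 1600000 in
theorem aux_main18 {V : Type} [Fintype V] [DecidableEq V] (G : SimpleGraph V) [DecidableRel G.Adj]
    (q : ℕ) (hq : 11 ≤ q) (b c : ℕ → ℕ)
    (hb0 : b 0 = q + 1) (hb1 : b 1 = q)
    (hc2 : c 2 = 1)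
    (hconn : G.Connected) (hdrg : IsDistRegular G 6 b c) :
    cheeger G (q + 1) ≤ ((q : ℝ) + 1 - Real.sqrt (3 * (q : ℝ))) / ((q : ℝ) + 1) := by
  classical
  set n := Fintype.card V with hn
  -- regularity
  have hreg : ∀ x : V, (univ.filter fun z => G.Adj x z).card = q + 1 := by
    intro x
    have h0 := (hdrg 0 (by norm_num) x x (by rw [SimpleGraph.dist_self])).2
    rw [aux_natcard, hb0] at h0
    rw [← h0]
    congr 1
    ext z
    simp [Finset.mem_filter, zero_add, SimpleGraph.dist_eq_one_iff_adj, and_self]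
  -- lower bound on n
  obtain ⟨x0⟩ := hconn.nonempty
  have hZ : ∀ y : V, G.Adj x0 y →
      (univ.filter fun z => G.Adj y z ∧ G.dist x0 z = 2).card = q := by
    intro y hy
    have h1 := (hdrg 1 (by norm_num) x0 y (SimpleGraph.dist_eq_one_iff_adj.mpr hy)).2
    rw [aux_natcard, hb1] at h1
    exact h1
  have hdisj : ∀ y ∈ (univ.filter fun y => G.Adj x0 y),
      ∀ y' ∈ (univ.filter fun y => G.Adj x0 y), y ≠ y' →
      Disjoint (univ.filter fun z => G.Adj y z ∧ G.dist x0 z = 2)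
        (univ.filter fun z => G.Adj y' z ∧ G.dist x0 z = 2) := by
    intro y hy y' hy' hne
    rw [Finset.disjoint_left]
    intro z hz hz'
    simp only [Finset.mem_filter, Finset.mem_univ, true_and] at hz hz' hy hy'
    have h2 := (hdrg 2 (by norm_num) x0 z hz.2).1
    rw [aux_natcard, hc2] at h2
    simp only [show (2:ℕ) - 1 = 1 from rfl] at h2
    have hyin : y ∈ univ.filter fun w => G.Adj z w ∧ G.dist x0 w = 1 := by
      simp only [Finset.mem_filter, Finset.mem_univ, true_and]
      exact ⟨hz.1.symm, SimpleGraph.dist_eq_one_iff_adj.mpr hy⟩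
    have hy'in : y' ∈ univ.filter fun w => G.Adj z w ∧ G.dist x0 w = 1 := by
      simp only [Finset.mem_filter, Finset.mem_univ, true_and]
      exact ⟨hz'.1.symm, SimpleGraph.dist_eq_one_iff_adj.mpr hy'⟩
    exact hne (Finset.card_le_one.mp (le_of_eq h2) y hyin y' hy'in)
  have hnq : q * q + q ≤ n := by
    have hb := Finset.card_biUnion hdisj
    have hle : ((univ.filter fun y => G.Adj x0 y).biUnion
        (fun y => univ.filter fun z => G.Adj y z ∧ G.dist x0 z = 2)).card ≤ n := by
      rw [hn, ← Finset.card_univ]; exact Finset.card_le_univ _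
    rw [hb] at hle
    rw [Finset.sum_congr rfl (fun y hy => hZ y (by simpa using hy))] at hle
    rw [Finset.sum_const, hreg x0, smul_eq_mul] at hle
    calc q * q + q = (q + 1) * q := by ring
      _ ≤ n := hle
  have hn132 : 132 ≤ n := by nlinarith
  -- the half-size family
  set m := n / 2 with hm
  have hmod := Nat.div_add_mod n 2
  have h2m : 2 * m ≤ n := by omega
  have h2m1 : n ≤ 2 * m + 1 := by omega
  have hm66 : 66 ≤ m := by omega
  have hFne : ((univ : Finset V).powersetCard m).Nonempty :=
    Finset.powersetCard_nonempty.mpr (by rw [Finset.card_univ]; omega)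
  obtain ⟨S, hSF, hSmin⟩ :=
    Finset.exists_min_image ((univ : Finset V).powersetCard m) (fun T => eB G T Tᶜ) hFne
  have hScard : S.card = m := (Finset.mem_powersetCard.mp hSF).2
  -- edge count per set
  have hA : ∀ T : Finset V, eB G T Tᶜ =
      ∑ p ∈ (univ ×ˢ univ).filter (fun p : V × V => G.Adj p.1 p.2),
        (if p.1 ∈ T ∧ p.2 ∉ T then 1 else 0) := by
    intro T
    have h : ((T ×ˢ Tᶜ).filter fun p => G.Adj p.1 p.2)
        = ((univ ×ˢ univ).filter (fun p : V × V => G.Adj p.1 p.2)).filter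
            (fun p => p.1 ∈ T ∧ p.2 ∉ T) := by
      ext p
      simp only [Finset.mem_filter, Finset.mem_product, Finset.mem_univ, Finset.mem_compl,
        true_and]
      tauto
    rw [eB, h, Finset.card_filter]
  have hAcard : ((univ ×ˢ univ).filter (fun p : V × V => G.Adj p.1 p.2)).card = n * (q + 1) := by
    rw [Finset.card_filter, Finset.sum_product]
    have h : ∀ x : V, (∑ y ∈ univ, if G.Adj x y then 1 else 0) = q + 1 := by
      intro x; rw [← Finset.card_filter]; exact hreg x
    rw [Finset.sum_congr rfl (fun x _ => h x), Finset.sum_const, Finset.card_univ, smul_eq_mul]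
  have hsum : ∑ T ∈ (univ : Finset V).powersetCard m, eB G T Tᶜ
      = n * (q + 1) * (n - 2).choose (m - 1) := by
    calc ∑ T ∈ (univ : Finset V).powersetCard m, eB G T Tᶜ
        = ∑ T ∈ (univ : Finset V).powersetCard m,
            ∑ p ∈ (univ ×ˢ univ).filter (fun p : V × V => G.Adj p.1 p.2),
              (if p.1 ∈ T ∧ p.2 ∉ T then 1 else 0) :=
          Finset.sum_congr rfl (fun T _ => hA T)
      _ = ∑ p ∈ (univ ×ˢ univ).filter (fun p : V × V => G.Adj p.1 p.2),
            ∑ T ∈ (univ : Finset V).powersetCard m,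
              (if p.1 ∈ T ∧ p.2 ∉ T then 1 else 0) := Finset.sum_comm
      _ = ∑ p ∈ (univ ×ˢ univ).filter (fun p : V × V => G.Adj p.1 p.2),
            (n - 2).choose (m - 1) := by
          refine Finset.sum_congr rfl (fun p hp => ?_)
          have hadj : G.Adj p.1 p.2 := (Finset.mem_filter.mp hp).2
          rw [← Finset.card_filter]
          exact aux_count p.1 p.2 hadj.ne m (by omega)
      _ = n * (q + 1) * (n - 2).choose (m - 1) := by
          rw [Finset.sum_const, hAcard, smul_eq_mul]
  -- min is at most average
  have hmin : eB G S Sᶜ * n.choose m ≤ n * (q + 1) * (n - 2).choose (m - 1) := by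
    have h1 : ((univ : Finset V).powersetCard m).card • eB G S Sᶜ
        ≤ ∑ T ∈ (univ : Finset V).powersetCard m, eB G T Tᶜ :=
      Finset.card_nsmul_le_sum _ _ _ (fun T hT => hSmin T hT)
    rw [hsum, Finset.card_powersetCard, Finset.card_univ, smul_eq_mul] at h1
    calc eB G S Sᶜ * n.choose m = n.choose m * eB G S Sᶜ := Nat.mul_comm _ _
      _ ≤ _ := h1
  -- binomial identity
  have hident : n * ((n - 1) * ((n - 2).choose (m - 1))) = n.choose m * (m * (n - m)) := by
    obtain ⟨a, ha⟩ : ∃ a, m = a + 1 := ⟨m - 1, by omega⟩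
    obtain ⟨u, hu⟩ : ∃ u, n = a + u + 2 := ⟨n - a - 2, by omega⟩
    have h1 : n - 1 = a + u + 1 := by omega
    have h2 : n - 2 = a + u := by omega
    have h3 : m - 1 = a := by omega
    have h4 : n - m = u + 1 := by omega
    rw [h1, h2, h3, h4, ha, hu]
    exact aux_choose a u
  -- key nat inequality
  have hkey : eB G S Sᶜ * (n - 1) ≤ (q + 1) * (m * (n - m)) := by
    have hpos : 0 < n.choose m := Nat.choose_pos (by omega)
    refine Nat.le_of_mul_le_mul_right ?_ hpos
    calc eB G S Sᶜ * (n - 1) * n.choose m = eB G S Sᶜ * n.choose m * (n - 1) := by ring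
      _ ≤ n * (q + 1) * (n - 2).choose (m - 1) * (n - 1) :=
          Nat.mul_le_mul_right _ hmin
      _ = (q + 1) * (n * ((n - 1) * ((n - 2).choose (m - 1)))) := by ring
      _ = (q + 1) * (n.choose m * (m * (n - m))) := by rw [hident]
      _ = (q + 1) * (m * (n - m)) * n.choose m := by ring
  -- move to the reals
  have hkeyR : (eB G S Sᶜ : ℝ) * ((n : ℝ) - 1) ≤ ((q : ℝ) + 1) * ((m : ℝ) * ((n : ℝ) - m)) := by
    have h := (Nat.cast_le (α := ℝ)).mpr hkey
    push_cast [Nat.cast_sub (show 1 ≤ n by omega), Nat.cast_sub (show m ≤ n by omega)] at h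
    linarith
  have hq' : (11 : ℝ) ≤ (q : ℝ) := by exact_mod_cast hq
  have hnR : (q : ℝ) * q + q ≤ (n : ℝ) := by exact_mod_cast hnq
  have hmR : (n : ℝ) - 1 ≤ 2 * (m : ℝ) := by
    have : (n : ℝ) ≤ 2 * m + 1 := by exact_mod_cast h2m1
    linarith
  have hmRn : 2 * (m : ℝ) ≤ (n : ℝ) := by exact_mod_cast h2m
  set s := Real.sqrt (3 * (q : ℝ)) with hs
  have hs0 : 0 ≤ s := Real.sqrt_nonneg _
  have hs2 : s ^ 2 = 3 * q := Real.sq_sqrt (by positivity)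
  have h1s : s * ((q : ℝ) + 1) ≤ ((q : ℝ) + 1) ^ 2 / 2 - 2 := by
    nlinarith [sq_nonneg (s * ((q : ℝ) + 1) - (((q : ℝ) + 1) ^ 2 / 2 - 2)), hs2, hs0, hq',
      sq_nonneg ((q : ℝ) - 11), sq_nonneg ((q : ℝ) + 1)]
  have hB : ((n : ℝ) - m) * ((q : ℝ) + 1) ≤ ((q : ℝ) + 1 - s) * ((n : ℝ) - 1) := by
    have h1n : s * ((q : ℝ) + 1) * ((n : ℝ) - 1) ≤ (((q : ℝ) + 1) ^ 2 / 2 - 2) * ((n : ℝ) - 1) :=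
      mul_le_mul_of_nonneg_right h1s (by nlinarith)
    nlinarith [h1n, hq', hnR, hmR, hmRn]
  -- conclude via csInf
  have hSne : S.Nonempty := Finset.card_pos.mp (by omega)
  have hbdd : BddBelow {x : ℝ | ∃ T : Finset V, T.Nonempty ∧ 2 * T.card ≤ Fintype.card V ∧
      x = (eB G T Tᶜ : ℝ) / ((q + 1 : ℕ) * T.card)} := by
    refine ⟨0, ?_⟩
    rintro x ⟨T, -, -, rfl⟩
    positivity
  have hmem : (eB G S Sᶜ : ℝ) / ((q + 1 : ℕ) * S.card) ∈
      {x : ℝ | ∃ T : Finset V, T.Nonempty ∧ 2 * T.card ≤ Fintype.card V ∧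
        x = (eB G T Tᶜ : ℝ) / ((q + 1 : ℕ) * T.card)} :=
    ⟨S, hSne, by rw [hScard]; exact h2m, rfl⟩
  refine le_trans (csInf_le hbdd hmem) ?_
  rw [hScard]
  have hd1 : (0 : ℝ) < ((q + 1 : ℕ) : ℝ) * (m : ℝ) := by
    have : (0:ℝ) < (m:ℝ) := by exact_mod_cast (show 0 < m by omega)
    positivity
  have hd2 : (0 : ℝ) < (q : ℝ) + 1 := by linarith
  rw [div_le_div_iff₀ hd1 hd2]
  have hfin : (eB G S Sᶜ : ℝ) * ((q : ℝ) + 1) * ((n : ℝ) - 1)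
      ≤ (((q : ℝ) + 1 - s) * (((q : ℝ) + 1) * m)) * ((n : ℝ) - 1) := by
    calc (eB G S Sᶜ : ℝ) * ((q : ℝ) + 1) * ((n : ℝ) - 1)
        = ((eB G S Sᶜ : ℝ) * ((n : ℝ) - 1)) * ((q : ℝ) + 1) := by ring
      _ ≤ (((q : ℝ) + 1) * ((m : ℝ) * ((n : ℝ) - m))) * ((q : ℝ) + 1) :=
          mul_le_mul_of_nonneg_right hkeyR (by linarith)
      _ = (((n : ℝ) - m) * ((q : ℝ) + 1)) * (((q : ℝ) + 1) * m) := by ring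
      _ ≤ (((q : ℝ) + 1 - s) * ((n : ℝ) - 1)) * (((q : ℝ) + 1) * m) := by
          refine mul_le_mul_of_nonneg_right hB ?_
          have : (0:ℝ) ≤ (m:ℝ) := by positivity
          nlinarith
      _ = (((q : ℝ) + 1 - s) * (((q : ℝ) + 1) * m)) * ((n : ℝ) - 1) := by ring
  have hn1 : (0 : ℝ) < (n : ℝ) - 1 := by nlinarith
  have := le_of_mul_le_mul_right hfin hn1
  push_cast at this ⊢
  linarith


/-- For `q ≥ 11`, a distance-regular graph with intersection array
`{q+1, q, q, q, q, q; 1, 1, 1, 1, 1, q+1}` (the incidence graph of a generalized hexagon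
`GH(q,q)`, of diameter 6 and valency `q+1`) satisfies
`h_G ≤ (q + 1 - √(3q))/(q + 1)`. -/
theorem stmt_18 {V : Type} [Fintype V] [DecidableEq V] (G : SimpleGraph V) [DecidableRel G.Adj]
    (q : ℕ) (hq : 11 ≤ q) (b c : ℕ → ℕ)
    (hb0 : b 0 = q + 1) (hb1 : b 1 = q) (hb2 : b 2 = q) (hb3 : b 3 = q)
    (hb4 : b 4 = q) (hb5 : b 5 = q)
    (hc1 : c 1 = 1) (hc2 : c 2 = 1) (hc3 : c 3 = 1) (hc4 : c 4 = 1)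
    (hc5 : c 5 = 1) (hc6 : c 6 = q + 1)
    (hconn : G.Connected) (hdrg : IsDistRegular G 6 b c)
    (hdiam : (∀ x y : V, G.dist x y ≤ 6) ∧ ∃ x y : V, G.dist x y = 6) :
    cheeger G (q + 1) ≤ ((q : ℝ) + 1 - Real.sqrt (3 * (q : ℝ))) / ((q : ℝ) + 1) := by
  exact aux_main18 G q hq b c hb0 hb1 hc2 hconn hdrg
end

section
/- Let d ≥ 1 and q ≥ 2 be integers and let G be the Hamming graph H(d,q), whose vertex set is the set of functions from Fin d to Fin q, two vertices being adjacent exactly when they differ in precisely one coordinate (Hamming distance 1). Then G is d(q−1)-regular and h_G ≤ q/(d(q−1)). (Here q/(d(q−1)) equals λ1 = (k − θ1)/k, since the second-largest adjacency eigenvalue of H(d,q) is θ1 = q(d−1) − d.) -/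
open Finset Matrix

/-- The Hamming graph `H(d, q)`: vertices are functions `Fin d → Fin q`, adjacent when
they differ in exactly one coordinate (Hamming distance 1). -/
def hammingGraph (d q : ℕ) : SimpleGraph (Fin d → Fin q) where
  Adj x y := hammingDist x y = 1
  symm := by
    constructor
    intro x y h
    rwa [hammingDist_comm]
  loopless := by
    constructor
    intro x h
    simp [hammingDist_self] at h

instance {d q : ℕ} : DecidableRel (hammingGraph d q).Adj := fun x y =>
  inferInstanceAs (Decidable (hammingDist x y = 1))

lemma hg_adj_iff {d q : ℕ} (x y : Fin d → Fin q) :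
    (hammingGraph d q).Adj x y ↔ ∃ i a, a ≠ x i ∧ y = Function.update x i a := by
  constructor
  · intro h
    have h1 : ({i | x i ≠ y i} : Finset (Fin d)).card = 1 := h
    obtain ⟨i, hi⟩ := Finset.card_eq_one.mp h1
    refine ⟨i, y i, ?_, ?_⟩
    · have : i ∈ ({i | x i ≠ y i} : Finset (Fin d)) := hi ▸ Finset.mem_singleton_self i
      simp only [Finset.mem_filter] at this
      exact fun h' => this.2 h'.symm
    · funext j
      by_cases hj : j = i
      · subst hj; simp [Function.update]
      · have : j ∉ ({i | x i ≠ y i} : Finset (Fin d)) := by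
          rw [hi]; simpa using hj
        simp only [Finset.mem_filter, Finset.mem_univ, true_and, not_not] at this
        simp [Function.update, hj, this.symm]
  · rintro ⟨i, a, ha, rfl⟩
    show ({j | x j ≠ Function.update x i a j} : Finset (Fin d)).card = 1
    have : ({j | x j ≠ Function.update x i a j} : Finset (Fin d)) = {i} := by
      ext j
      by_cases hj : j = i
      · subst hj; simp only [Function.update, dif_pos, Finset.mem_filter, Finset.mem_univ,
          true_and, Finset.mem_singleton]
        simpa using fun h => ha h.symm
      · simp [Function.update, hj]
    rw [this, Finset.card_singleton]

lemma hg_regular {d q : ℕ} (hq : 2 ≤ q) :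
    (hammingGraph d q).IsRegularOfDegree (d * (q - 1)) := by
  intro x
  rw [SimpleGraph.degree]
  have := Finset.card_bij
    (s := (univ : Finset (Fin d)).sigma fun i => univ.filter fun a : Fin q => a ≠ x i)
    (t := (hammingGraph d q).neighborFinset x)
    (i := fun p _ => Function.update x p.1 p.2)
    (by
      rintro ⟨i, a⟩ hp
      simp only [Finset.mem_sigma, Finset.mem_filter] at hp
      rw [SimpleGraph.mem_neighborFinset, hg_adj_iff]
      exact ⟨i, a, hp.2.2, rfl⟩)
    (by
      rintro ⟨i, a⟩ hp ⟨j, b⟩ hp' h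
      simp only [Finset.mem_sigma, Finset.mem_filter] at hp hp'
      simp only at h
      have hi := congrFun h i
      by_cases hij : i = j
      · subst hij
        simp only [Function.update_self] at hi
        simp [hi]
      · rw [Function.update_self, Function.update_of_ne hij] at hi
        exact absurd hi hp.2.2)
    (by
      intro y hy
      rw [SimpleGraph.mem_neighborFinset, hg_adj_iff] at hy
      obtain ⟨i, a, ha, rfl⟩ := hy
      exact ⟨⟨i, a⟩, by simp [ha], rfl⟩)
  rw [← this]
  rw [Finset.card_sigma]
  have : ∀ i : Fin d, (univ.filter fun a : Fin q => a ≠ x i).card = q - 1 := by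
    intro i
    rw [Finset.filter_ne', Finset.card_erase_of_mem (Finset.mem_univ _)]
    simp
  simp only [this, Finset.sum_const, Finset.card_univ, Fintype.card_fin, smul_eq_mul]

section main
variable (d q : ℕ)

lemma hg_cheeger_aux (hd : 1 ≤ d) (hq : 2 ≤ q) :
    ∃ S : Finset (Fin d → Fin q), S.Nonempty ∧
      2 * S.card ≤ Fintype.card (Fin d → Fin q) ∧
      eB (hammingGraph d q) S Sᶜ ≤ S.card * (q - 1) := by
  have hq0 : 0 < q := by omega
  set i0 : Fin d := ⟨0, hd⟩
  set z0 : Fin q := ⟨0, hq0⟩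
  set z1 : Fin q := ⟨1, hq⟩
  set S : Finset (Fin d → Fin q) := univ.filter fun x => x i0 = z0 with hS
  have hSmem : ∀ x : Fin d → Fin q, x ∈ S ↔ x i0 = z0 := by
    intro x; simp [hS]
  refine ⟨S, ⟨fun _ => z0, (hSmem _).mpr rfl⟩, ?_, ?_⟩
  · -- 2|S| ≤ |V|
    set T : Finset (Fin d → Fin q) := univ.filter fun x => x i0 = z1 with hT
    have hdisj : Disjoint S T := by
      rw [Finset.disjoint_left]
      intro x hx hx'
      simp only [hS, hT, Finset.mem_filter] at hx hx'
      rw [hx.2] at hx'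
      exact absurd hx'.2 (by simp [z0, z1, Fin.ext_iff])
    have hcard : S.card = T.card := by
      apply Finset.card_bij (fun x _ => Function.update x i0 z1)
      · intro x hx
        simp [hT, Function.update_self]
      · intro x hx y hy h
        rw [hSmem] at hx hy
        funext j
        by_cases hj : j = i0
        · subst hj; rw [hx, hy]
        · have := congrFun h j
          rwa [Function.update_of_ne hj, Function.update_of_ne hj] at this
      · intro y hy
        refine ⟨Function.update y i0 z0, (hSmem _).mpr (Function.update_self _ _ _), ?_⟩
        simp only [hT, Finset.mem_filter] at hy
        funext j
        by_cases hj : j = i0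
        · subst hj; rw [Function.update_self, hy.2]
        · rw [Function.update_of_ne hj, Function.update_of_ne hj]
    calc 2 * S.card = S.card + T.card := by omega
    _ = (S ∪ T).card := (Finset.card_union_of_disjoint hdisj).symm
    _ ≤ _ := Finset.card_le_univ _
  · -- eB bound
    have key : ∀ x y : Fin d → Fin q, x ∈ S → y ∈ Sᶜ → (hammingGraph d q).Adj x y →
        y = Function.update x i0 (y i0) := by
      intro x y hx hy hadj
      rw [Finset.mem_compl, hSmem] at hy
      rw [hSmem] at hx
      obtain ⟨i, a, ha, rfl⟩ := (hg_adj_iff x y).mp hadj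
      by_cases hi : i = i0
      · subst hi; simp
      · exfalso
        exact hy (by rw [Function.update_of_ne (fun h => hi h.symm), hx])
    have := Finset.card_le_card_of_injOn
      (f := fun p : (Fin d → Fin q) × (Fin d → Fin q) => (p.1, p.2 i0))
      (s := (S ×ˢ Sᶜ).filter fun p => (hammingGraph d q).Adj p.1 p.2)
      (t := S ×ˢ (univ.erase z0))
      (by
        rintro ⟨x, y⟩ hp
        simp only [Finset.mem_coe, Finset.mem_filter, Finset.mem_product] at hp
        simp only [Finset.mem_coe, Finset.mem_product, Finset.mem_erase, Finset.mem_univ, and_true]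
        refine ⟨hp.1.1, ?_⟩
        have := hp.1.2
        rw [Finset.mem_compl, hSmem] at this
        exact this)
      (by
        rintro ⟨x, y⟩ hp ⟨x', y'⟩ hp' h
        simp only [Finset.mem_coe, Finset.mem_filter, Finset.mem_product] at hp hp'
        simp only [Prod.mk.injEq] at h
        obtain ⟨h1, h2⟩ := h
        subst h1
        have e1 := key x y hp.1.1 hp.1.2 hp.2
        have e2 := key x y' hp'.1.1 hp'.1.2 hp'.2
        simp only [Prod.mk.injEq, true_and]
        rw [e1, e2, h2])
    calc eB (hammingGraph d q) S Sᶜ ≤ (S ×ˢ (univ.erase z0)).card := this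
    _ = S.card * (q - 1) := by
        rw [Finset.card_product, Finset.card_erase_of_mem (Finset.mem_univ _)]
        simp

end main


/-- For `d ≥ 1` and `q ≥ 2`, the Hamming graph `H(d, q)` is `d(q-1)`-regular and
satisfies `h_G ≤ q/(d(q-1))`. -/
theorem stmt_19 (d q : ℕ) (hd : 1 ≤ d) (hq : 2 ≤ q) :
    (hammingGraph d q).IsRegularOfDegree (d * (q - 1)) ∧
      cheeger (hammingGraph d q) (d * (q - 1)) ≤ (q : ℝ) / ((d : ℝ) * ((q : ℝ) - 1)) := by
  refine ⟨hg_regular hq, ?_⟩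
  obtain ⟨S, hSne, hShalf, hSbound⟩ := hg_cheeger_aux d q hd hq
  have hbdd : BddBelow {x : ℝ | ∃ S : Finset (Fin d → Fin q), S.Nonempty ∧
      2 * S.card ≤ Fintype.card (Fin d → Fin q) ∧
      x = (eB (hammingGraph d q) S Sᶜ : ℝ) / ((d * (q - 1) : ℕ) * S.card)} := by
    refine ⟨0, ?_⟩
    rintro x ⟨T, _, _, rfl⟩
    positivity
  have hmem : (eB (hammingGraph d q) S Sᶜ : ℝ) / ((d * (q - 1) : ℕ) * S.card) ∈
      {x : ℝ | ∃ S : Finset (Fin d → Fin q), S.Nonempty ∧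
      2 * S.card ≤ Fintype.card (Fin d → Fin q) ∧
      x = (eB (hammingGraph d q) S Sᶜ : ℝ) / ((d * (q - 1) : ℕ) * S.card)} :=
    ⟨S, hSne, hShalf, rfl⟩
  refine le_trans (csInf_le hbdd hmem) ?_
  have hs : (1 : ℝ) ≤ S.card := by exact_mod_cast hSne.card_pos
  have he : (eB (hammingGraph d q) S Sᶜ : ℝ) ≤ S.card * ((q : ℝ) - 1) := by
    have := hSbound
    have h2 : (eB (hammingGraph d q) S Sᶜ : ℝ) ≤ (S.card * (q - 1) : ℕ) := by
      exact_mod_cast this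
    calc (eB (hammingGraph d q) S Sᶜ : ℝ) ≤ (S.card * (q - 1) : ℕ) := h2
    _ = S.card * ((q : ℝ) - 1) := by
        push_cast [Nat.cast_sub (by omega : 1 ≤ q)]; ring
  have hqr : (2 : ℝ) ≤ q := by exact_mod_cast hq
  have hdr : (1 : ℝ) ≤ d := by exact_mod_cast hd
  have hden : (0 : ℝ) < ((d * (q - 1) : ℕ) : ℝ) * S.card := by
    have h1 : (0 : ℝ) < ((d * (q - 1) : ℕ) : ℝ) := by
      exact_mod_cast Nat.mul_pos hd (by omega)
    nlinarith
  have hden2 : (0 : ℝ) < (d : ℝ) * ((q : ℝ) - 1) := by nlinarith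
  rw [div_le_div_iff₀ hden hden2]
  have hcast : ((d * (q - 1) : ℕ) : ℝ) = (d : ℝ) * ((q : ℝ) - 1) := by
    push_cast [Nat.cast_sub (by omega : 1 ≤ q)]; ring
  rw [hcast]
  have heB : (0 : ℝ) ≤ (eB (hammingGraph d q) S Sᶜ : ℝ) := by positivity
  nlinarith [mul_le_mul_of_nonneg_right he (le_of_lt hden2), hs, hqr, hdr]
end
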